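/- arXiv:0901.3897 — 5 statements merged into one kernel-verified Lean document; each statement's English description precedes it below -/
import Mathlib

section
/- Let G be a finite simple graph that is a domain, and let H_1 and H_2 be two distinct connected components of G^{0-1}, with vertex bipartitions A_1 ∪ B_1 and A_2 ∪ B_2 respectively. If G contains an edge between some vertex of A_1 and some vertex of A_2, then every vertex of A_1 is adjacent in G to every vertex of A_2. -/
variable {V : Type*} [Fintype V] [DecidableEq V]

/-- For `k ∈ ℕ`, a `k`-cover of `G` is a function from the vertices of `G` to `ℕ` that is
not identically zero and whose values at the two endpoints of any edge sum to at least `k`. -/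
def IsCover (G : SimpleGraph V) (k : ℕ) (a : V → ℕ) : Prop :=
  a ≠ 0 ∧ ∀ i j : V, G.Adj i j → k ≤ a i + a j

/-- A `k`-cover is basic if it is not the pointwise sum of a `k`-cover and a `0`-cover. -/
def IsBasicCover (G : SimpleGraph V) (k : ℕ) (a : V → ℕ) : Prop :=
  IsCover G k a ∧ ¬ ∃ b c : V → ℕ, IsCover G k b ∧ IsCover G 0 c ∧ a = b + c

/-- `G` is a domain if for all `s, t` with `s + t ≥ 1`, the pointwise sum of any `s` basic
`1`-covers and any `t` basic `2`-covers of `G` is a basic `(s + 2t)`-cover. -/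
def IsGraphDomain (G : SimpleGraph V) : Prop :=
  ∀ s t : ℕ, 1 ≤ s + t → ∀ f : Fin s → V → ℕ, ∀ g : Fin t → V → ℕ,
    (∀ p, IsBasicCover G 1 (f p)) → (∀ q, IsBasicCover G 2 (g q)) →
    IsBasicCover G (s + 2 * t) ((∑ p, f p) + (∑ q, g q))

/-- `G` is unmixed if all basic `1`-covers of `G` have the same norm. -/
def IsUnmixed (G : SimpleGraph V) : Prop :=
  ∀ a b : V → ℕ, IsBasicCover G 1 a → IsBasicCover G 1 b → ∑ v, a v = ∑ v, b v

/-- `G` satisfies WSC if it has at least one edge and every non-isolated vertex `i` has a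
neighbour `j` such that any neighbour of `i` is adjacent to any neighbour of `j`. -/
def SatisfiesWSC (G : SimpleGraph V) : Prop :=
  (∃ i j : V, G.Adj i j) ∧
    ∀ i : V, (∃ x, G.Adj i x) →
      ∃ j : V, G.Adj i j ∧ ∀ i' j' : V, G.Adj i i' → G.Adj j j' → G.Adj i' j'

/-- `G` satisfies SC if for every edge `{i, j}`, every neighbour `i'` of `i` and every
neighbour `j'` of `j`, one has `i' ≠ j'` and `{i', j'}` is an edge. -/
def SatisfiesSC (G : SimpleGraph V) : Prop :=
  ∀ i j i' j' : V, G.Adj i j → G.Adj i i' → G.Adj j j' → i' ≠ j' ∧ G.Adj i' j'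

/-- `G` satisfies MSC if the set of non-isolated vertices of `G` is nonempty and carries a
perfect matching `M` (a matching of `G` whose vertex set is exactly the set of non-isolated
vertices) such that for every edge `{i, j}` of `M`, every neighbour `i'` of `i` in `G` and
every neighbour `j'` of `j` in `G`, `{i', j'}` is an edge of `G`. -/
def SatisfiesMSC (G : SimpleGraph V) : Prop :=
  ∃ M : G.Subgraph, M.verts = {v : V | ∃ w, G.Adj v w} ∧ M.verts.Nonempty ∧
    M.IsMatching ∧
    ∀ i j : V, M.Adj i j → ∀ i' j' : V, G.Adj i i' → G.Adj j j' → G.Adj i' j'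

/-- The graph `G^{0-1}`: its edges are the edges `{i, j}` of `G` such that `a i + a j = 1`
for every basic `1`-cover `a` of `G`.  (Its vertex set is interpreted as the set of
non-isolated vertices of `G`; here it is defined on all of `V`, and the vertices of `G`
that are isolated stay isolated, so they can be excluded explicitly when needed.) -/
def ZeroOne (G : SimpleGraph V) : SimpleGraph V where
  Adj i j := G.Adj i j ∧ ∀ a : V → ℕ, IsBasicCover G 1 a → a i + a j = 1
  symm := by
    constructor
    intro i j h
    exact ⟨h.1.symm, fun a ha => by rw [add_comm]; exact h.2 a ha⟩
  loopless := by
    constructor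
    intro i h
    exact G.loopless.irrefl i h.1

/-- `A ∪ B` is a vertex bipartition of the connected component `C` of `H`, and the edges of
`H` inside `C` are exactly the pairs `{x, y}` with `x ∈ A` and `y ∈ B` (so the component is
a complete bipartite graph on `A ∪ B`). -/
def IsCompBipartition (H : SimpleGraph V) (C : H.ConnectedComponent) (A B : Set V) : Prop :=
  A ∪ B = C.supp ∧ Disjoint A B ∧
    ∀ x ∈ C.supp, ∀ y ∈ C.supp,
      (H.Adj x y ↔ (x ∈ A ∧ y ∈ B) ∨ (x ∈ B ∧ y ∈ A))

/-- The graph `G⁺` obtained from `G` by attaching a pendant vertex to each vertex of `G`: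
`Sum.inl v` is the original vertex `v`, and `Sum.inr v` is the pendant attached to `v`. -/
def GPlus (G : SimpleGraph V) : SimpleGraph (V ⊕ V) where
  Adj x y :=
    match x, y with
    | Sum.inl u, Sum.inl v => G.Adj u v
    | Sum.inl u, Sum.inr v => u = v
    | Sum.inr u, Sum.inl v => u = v
    | Sum.inr _, Sum.inr _ => False
  symm := by
    constructor
    rintro (u | u) (v | v) h
    · exact h.symm
    · exact h.symm
    · exact h.symm
    · exact h.elim
  loopless := by
    constructor
    rintro (u | u) h
    · exact G.loopless.irrefl u h
    · exact h
/-- Every vertex cover (as a finset) contains a minimal vertex cover. -/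
lemma exists_minimal_vc (G : SimpleGraph V) :
    ∀ S : Finset V, (∀ i j, G.Adj i j → i ∈ S ∨ j ∈ S) →
    ∃ M, M ⊆ S ∧ (∀ i j, G.Adj i j → i ∈ M ∨ j ∈ M) ∧
      ∀ M', M' ⊆ M → (∀ i j, G.Adj i j → i ∈ M' ∨ j ∈ M') → M' = M := by
  intro S
  induction S using Finset.strongInductionOn with
  | _ S ih =>
    intro hS
    by_cases h : ∃ T, T ⊂ S ∧ (∀ i j, G.Adj i j → i ∈ T ∨ j ∈ T)
    · obtain ⟨T, hTS, hT⟩ := h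
      obtain ⟨M, hMT, hM, hmin⟩ := ih T hTS hT
      exact ⟨M, hMT.trans hTS.subset, hM, hmin⟩
    · refine ⟨S, subset_rfl, hS, fun M' hM'S hM' => ?_⟩
      by_contra hne
      exact h ⟨M', ssubset_of_subset_of_ne hM'S hne, hM'⟩

/-- The indicator function of a minimal vertex cover is a basic 1-cover. -/
lemma indicator_basic (G : SimpleGraph V) (M : Finset V)
    (hM : ∀ i j, G.Adj i j → i ∈ M ∨ j ∈ M)
    (hmin : ∀ M', M' ⊆ M → (∀ i j, G.Adj i j → i ∈ M' ∨ j ∈ M') → M' = M)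
    (hne : M.Nonempty) :
    IsBasicCover G 1 (fun v => if v ∈ M then 1 else 0) := by
  classical
  constructor
  · constructor
    · obtain ⟨v, hv⟩ := hne
      intro h0
      have := congrFun h0 v
      simp [hv] at this
    · intro i j hij
      rcases hM i j hij with h | h <;> simp [h]
  · rintro ⟨b, c, hb, hc, habc⟩
    set S : Finset V := Finset.univ.filter (fun v => b v ≠ 0) with hSdef
    have hbS : ∀ v, v ∈ S ↔ b v ≠ 0 := by intro v; simp [hSdef]
    have habc' : ∀ v, b v + c v = (if v ∈ M then 1 else 0) := by
      intro v; exact (congrFun habc v).symm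
    have hSsub : S ⊆ M := by
      intro v hv
      have hbv := (hbS v).1 hv
      have h2 := habc' v
      by_contra hvM
      simp [hvM] at h2
      omega
    have hSvc : ∀ i j, G.Adj i j → i ∈ S ∨ j ∈ S := by
      intro i j hij
      have h1 := hb.2 i j hij
      rw [hbS, hbS]
      omega
    have hSM := hmin S hSsub hSvc
    obtain ⟨v, hv⟩ : ∃ v, c v ≠ 0 := by
      by_contra h
      push_neg at h
      exact hc.1 (funext fun v => h v)
    have hv1 := habc' v
    have hvM : v ∈ M := by
      by_contra h; simp [h] at hv1; omega
    have hbv : b v ≠ 0 := (hbS v).1 (hSM ▸ hvM)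
    simp [hvM] at hv1
    omega

/-- Along a connected component of `G^{0-1}` with bipartition `A ∪ B`, any basic 1-cover
is constant on `A` and constant on `B`, with the two values summing to 1. -/
lemma walk_alternate (G : SimpleGraph V) (C : (ZeroOne G).ConnectedComponent)
    (A B : Set V) (hb : IsCompBipartition (ZeroOne G) C A B)
    (a : V → ℕ) (ha : IsBasicCover G 1 a) :
    ∀ u v : V, (ZeroOne G).Walk u v → u ∈ C.supp →
      ((u ∈ A → v ∈ A → a u = a v) ∧ (u ∈ B → v ∈ B → a u = a v) ∧
       (u ∈ A → v ∈ B → a u + a v = 1) ∧ (u ∈ B → v ∈ A → a u + a v = 1)) := by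
  intro u v w
  induction w with
  | nil =>
    intro _
    exact ⟨fun _ _ => rfl, fun _ _ => rfl,
      fun hA hB => (Set.disjoint_left.mp hb.2.1 hA hB).elim,
      fun hB hA => (Set.disjoint_left.mp hb.2.1 hA hB).elim⟩
  | @cons u p v h w ih =>
    intro hu
    have hp : p ∈ C.supp := by
      rw [SimpleGraph.ConnectedComponent.mem_supp_iff] at hu ⊢
      rw [← hu]
      exact SimpleGraph.ConnectedComponent.sound h.reachable.symm
    have hsum : a u + a p = 1 := h.2 a ha
    have hside := (hb.2.2 u hu p hp).1 h
    have ihp := ih hp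
    obtain ⟨i1, i2, i3, i4⟩ := ihp
    rcases hside with ⟨huA, hpB⟩ | ⟨huB, hpA⟩
    · refine ⟨fun _ hvA => ?_, fun huB _ => ?_, fun _ hvB => ?_, fun huB _ => ?_⟩
      · have := i4 hpB hvA; omega
      · exact (Set.disjoint_left.mp hb.2.1 huA huB).elim
      · have := i2 hpB hvB; omega
      · exact (Set.disjoint_left.mp hb.2.1 huA huB).elim
    · refine ⟨fun huA _ => ?_, fun _ hvB => ?_, fun huA _ => ?_, fun _ hvA => ?_⟩
      · exact (Set.disjoint_left.mp hb.2.1 huA huB).elim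
      · have := i3 hpA hvB; omega
      · exact (Set.disjoint_left.mp hb.2.1 huA huB).elim
      · have := i1 hpA hvA; omega

/-- Let `G` be a domain and let `H₁, H₂` be two distinct connected components
of `G^{0-1}` with bipartitions `A₁ ∪ B₁` and `A₂ ∪ B₂`.  If `G` has an edge between `A₁`
and `A₂`, then every vertex of `A₁` is adjacent in `G` to every vertex of `A₂`. -/
theorem edge_between_A_parts_complete (G : SimpleGraph V) (hG : IsGraphDomain G)
    (C₁ C₂ : (ZeroOne G).ConnectedComponent) (hne : C₁ ≠ C₂)
    (h₁ : C₁.supp ⊆ {v : V | ∃ w, G.Adj v w}) (h₂ : C₂.supp ⊆ {v : V | ∃ w, G.Adj v w})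
    (A₁ B₁ A₂ B₂ : Set V)
    (hb₁ : IsCompBipartition (ZeroOne G) C₁ A₁ B₁)
    (hb₂ : IsCompBipartition (ZeroOne G) C₂ A₂ B₂)
    (hedge : ∃ x ∈ A₁, ∃ y ∈ A₂, G.Adj x y) :
    ∀ x ∈ A₁, ∀ y ∈ A₂, G.Adj x y := by
  classical
  intro x hx y hy
  by_contra hxy
  obtain ⟨x₀, hx₀, y₀, hy₀, hadj⟩ := hedge
  set S₀ : Finset V := Finset.univ \ {x, y} with hS₀def
  have hS₀ : ∀ i j : V, G.Adj i j → i ∈ S₀ ∨ j ∈ S₀ := by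
    intro i j hij
    by_contra h
    push_neg at h
    obtain ⟨h1, h2⟩ := h
    simp [hS₀def] at h1 h2
    have h1' : i = x ∨ i = y := by tauto
    have h2' : j = x ∨ j = y := by tauto
    rcases h1' with rfl | rfl <;> rcases h2' with rfl | rfl
    · exact G.loopless.irrefl _ hij
    · exact hxy hij
    · exact hxy hij.symm
    · exact G.loopless.irrefl _ hij
  obtain ⟨M, hMS, hMvc, hMmin⟩ := exists_minimal_vc G S₀ hS₀
  have hxsupp : x ∈ C₁.supp := hb₁.1 ▸ Set.mem_union_left _ hx
  have hysupp : y ∈ C₂.supp := hb₂.1 ▸ Set.mem_union_left _ hy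
  obtain ⟨wx, hwx⟩ := h₁ hxsupp
  have hMne : M.Nonempty := by
    rcases hMvc x wx hwx with h | h
    · exact ⟨x, h⟩
    · exact ⟨wx, h⟩
  set a : V → ℕ := fun v => if v ∈ M then 1 else 0 with hadef
  have hab : IsBasicCover G 1 a := indicator_basic G M hMvc hMmin hMne
  have hxM : x ∉ M := by
    intro h
    have := hMS h
    simp [hS₀def] at this
  have hyM : y ∉ M := by
    intro h
    have := hMS h
    simp [hS₀def] at this
  have hax : a x = 0 := by simp [hadef, hxM]
  have hay : a y = 0 := by simp [hadef, hyM]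
  -- propagate along C₁ : a x₀ = a x = 0
  have hx₀supp : x₀ ∈ C₁.supp := hb₁.1 ▸ Set.mem_union_left _ hx₀
  have hy₀supp : y₀ ∈ C₂.supp := hb₂.1 ▸ Set.mem_union_left _ hy₀
  have hreach1 : (ZeroOne G).Reachable x x₀ := by
    rw [SimpleGraph.ConnectedComponent.mem_supp_iff] at hxsupp hx₀supp
    exact SimpleGraph.ConnectedComponent.exact (hxsupp.trans hx₀supp.symm)
  have hreach2 : (ZeroOne G).Reachable y y₀ := by
    rw [SimpleGraph.ConnectedComponent.mem_supp_iff] at hysupp hy₀supp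
    exact SimpleGraph.ConnectedComponent.exact (hysupp.trans hy₀supp.symm)
  obtain ⟨w1⟩ := hreach1
  obtain ⟨w2⟩ := hreach2
  have hax₀ : a x = a x₀ :=
    (walk_alternate G C₁ A₁ B₁ hb₁ a hab x x₀ w1 hxsupp).1 hx hx₀
  have hay₀ : a y = a y₀ :=
    (walk_alternate G C₂ A₂ B₂ hb₂ a hab y y₀ w2 hysupp).1 hy hy₀
  have hcov := hab.1.2 x₀ y₀ hadj
  omega
end

section
/- Let G be a finite simple graph that is a domain, and let H_1 and H_2 be two distinct connected components of G^{0-1}, with vertex bipartitions A_1 ∪ B_1 and A_2 ∪ B_2 respectively. If G contains an edge between some vertex of A_1 and some vertex of A_2, then G contains no edge between a vertex of B_1 and a vertex of B_2. -/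
variable {V : Type*} [Fintype V] [DecidableEq V]

/-- Let `G` be a domain and let `H₁, H₂` be two distinct connected components
of `G^{0-1}` with bipartitions `A₁ ∪ B₁` and `A₂ ∪ B₂`.  If `G` has an edge between `A₁`
and `A₂`, then `G` has no edge between `B₁` and `B₂`. -/
theorem edge_between_A_parts_no_edge_between_B_parts (G : SimpleGraph V)
    (hG : IsGraphDomain G)
    (C₁ C₂ : (ZeroOne G).ConnectedComponent) (hne : C₁ ≠ C₂)
    (h₁ : C₁.supp ⊆ {v : V | ∃ w, G.Adj v w}) (h₂ : C₂.supp ⊆ {v : V | ∃ w, G.Adj v w})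
    (A₁ B₁ A₂ B₂ : Set V)
    (hb₁ : IsCompBipartition (ZeroOne G) C₁ A₁ B₁)
    (hb₂ : IsCompBipartition (ZeroOne G) C₂ A₂ B₂)
    (hedge : ∃ x ∈ A₁, ∃ y ∈ A₂, G.Adj x y) :
    ¬ ∃ x ∈ B₁, ∃ y ∈ B₂, G.Adj x y := by
  rintro ⟨y₁, hy₁, y₂, hy₂, hyadj⟩
  obtain ⟨x₁, hx₁, x₂, hx₂, hxadj⟩ := hedge
  obtain ⟨hU₁, hD₁, hA₁⟩ := hb₁
  obtain ⟨hU₂, hD₂, hA₂⟩ := hb₂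
  have hx₁s : x₁ ∈ C₁.supp := hU₁ ▸ (Or.inl hx₁)
  have hy₁s : y₁ ∈ C₁.supp := hU₁ ▸ (Or.inr hy₁)
  have hx₂s : x₂ ∈ C₂.supp := hU₂ ▸ (Or.inl hx₂)
  have hy₂s : y₂ ∈ C₂.supp := hU₂ ▸ (Or.inr hy₂)
  have e₁ : (ZeroOne G).Adj x₁ y₁ := (hA₁ x₁ hx₁s y₁ hy₁s).mpr (Or.inl ⟨hx₁, hy₁⟩)
  have e₂ : (ZeroOne G).Adj x₂ y₂ := (hA₂ x₂ hx₂s y₂ hy₂s).mpr (Or.inl ⟨hx₂, hy₂⟩)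
  have key : (ZeroOne G).Adj x₁ x₂ := by
    refine ⟨hxadj, fun a ha => ?_⟩
    have h1 := e₁.2 a ha
    have h2 := e₂.2 a ha
    have h3 := ha.1.2 x₁ x₂ hxadj
    have h4 := ha.1.2 y₁ y₂ hyadj
    omega
  apply hne
  have hc₁ : (ZeroOne G).connectedComponentMk x₁ = C₁ :=
    (SimpleGraph.ConnectedComponent.mem_supp_iff C₁ x₁).mp hx₁s
  have hc₂ : (ZeroOne G).connectedComponentMk x₂ = C₂ :=
    (SimpleGraph.ConnectedComponent.mem_supp_iff C₂ x₂).mp hx₂s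
  rw [← hc₁, ← hc₂]
  exact SimpleGraph.ConnectedComponent.sound key.reachable
end

section
/- Let G be a finite simple graph that is a domain, and let H_i, H_j, H_k be connected components of G^{0-1} with H_i distinct from H_j and from H_k, with vertex bipartitions A_i ∪ B_i, A_j ∪ B_j, A_k ∪ B_k respectively. If G contains an edge between a vertex of A_i and a vertex of A_j, and an edge between a vertex of B_i and a vertex of B_k, then G contains an edge between a vertex of A_j and a vertex of B_k. -/
variable {V : Type*} [Fintype V] [DecidableEq V]

lemma exists_basic_le (G : SimpleGraph V) (k : ℕ) :
    ∀ (n : ℕ) (c : V → ℕ), ∑ v, c v ≤ n → IsCover G k c →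
      ∃ d : V → ℕ, IsBasicCover G k d ∧ ∀ v, d v ≤ c v := by
  intro n
  induction n with
  | zero =>
    intro c hsum hc
    exfalso
    apply hc.1
    funext v
    have h0 := Finset.sum_eq_zero_iff.mp (Nat.le_zero.mp hsum)
    simpa using h0 v (Finset.mem_univ v)
  | succ n ih =>
    intro c hsum hc
    by_cases hb : IsBasicCover G k c
    · exact ⟨c, hb, fun v => le_rfl⟩
    · have hex : ∃ b' c' : V → ℕ, IsCover G k b' ∧ IsCover G 0 c' ∧ c = b' + c' := by
        unfold IsBasicCover at hb
        push_neg at hb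
        exact hb hc
      obtain ⟨b', c', hb', hc', heq⟩ := hex
      have hv0 : ∃ v, c' v ≠ 0 := by
        by_contra hno
        push_neg at hno
        exact hc'.1 (funext fun v => by simpa using hno v)
      obtain ⟨v0, hv0⟩ := hv0
      have hsum' : ∑ v, b' v ≤ n := by
        have h1 : ∑ v, c v = ∑ v, b' v + ∑ v, c' v := by
          rw [heq, ← Finset.sum_add_distrib]
          rfl
        have h2 : 1 ≤ ∑ v, c' v :=
          le_trans (Nat.one_le_iff_ne_zero.mpr hv0)
            (Finset.single_le_sum (fun i _ => Nat.zero_le _) (Finset.mem_univ v0))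
        omega
      obtain ⟨d, hd, hle⟩ := ih b' hsum' hb'
      exact ⟨d, hd, fun v => le_trans (hle v) (by rw [heq]; exact Nat.le_add_right _ _)⟩

lemma walk_alternates (G : SimpleGraph V) (C : (ZeroOne G).ConnectedComponent)
    (A B : Set V) (hb : IsCompBipartition (ZeroOne G) C A B)
    (d : V → ℕ) (hd : IsBasicCover G 1 d) :
    ∀ u v : V, (ZeroOne G).Walk u v → u ∈ C.supp →
      ((u ∈ A ∧ d u = 1) ∨ (u ∈ B ∧ d u = 0)) →
      ((v ∈ A ∧ d v = 1) ∨ (v ∈ B ∧ d v = 0)) := by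
  intro u v p
  induction p with
  | nil => intro _ h; exact h
  | @cons u z v hadj p ih =>
    intro hu h
    have hadj' : (ZeroOne G).Adj u z ∧ ∀ a : V → ℕ, IsBasicCover G 1 a → a u + a z = 1 :=
      ⟨hadj, hadj.2⟩
    have hz : z ∈ C.supp := by
      rw [SimpleGraph.ConnectedComponent.mem_supp_iff] at hu ⊢
      rw [← hu]
      exact (SimpleGraph.ConnectedComponent.sound hadj.symm.reachable)
    have hsum : d u + d z = 1 := hadj.2 d hd
    have hsides := (hb.2.2 u hu z hz).mp hadj
    have hdisj := hb.2.1
    rcases h with ⟨huA, hdu⟩ | ⟨huB, hdu⟩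
    · rcases hsides with ⟨_, hzB⟩ | ⟨huB, _⟩
      · exact ih hz (Or.inr ⟨hzB, by omega⟩)
      · exact absurd huB (Set.disjoint_left.mp hdisj huA)
    · rcases hsides with ⟨huA, _⟩ | ⟨_, hzA⟩
      · exact absurd huB (Set.disjoint_left.mp hdisj huA)
      · exact ih hz (Or.inl ⟨hzA, by omega⟩)


/-- Let `G` be a domain and let `Hᵢ, Hⱼ, Hₖ` be connected components of
`G^{0-1}` with `Hᵢ` distinct from `Hⱼ` and from `Hₖ`, with bipartitions `Ai ∪ Bi`,
`Aj ∪ Bj`, `Ak ∪ Bk`.  If `G` has an edge between `Ai` and `Aj` and an edge between `Bi`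
and `Bk`, then `G` has an edge between `Aj` and `Bk`. -/
theorem edge_between_Aj_and_Bk (G : SimpleGraph V) (hG : IsGraphDomain G)
    (Ci Cj Ck : (ZeroOne G).ConnectedComponent) (hij : Ci ≠ Cj) (hik : Ci ≠ Ck)
    (hsuppi : Ci.supp ⊆ {v : V | ∃ w, G.Adj v w}) (hsuppj : Cj.supp ⊆ {v : V | ∃ w, G.Adj v w})
    (hsuppk : Ck.supp ⊆ {v : V | ∃ w, G.Adj v w})
    (Ai Bi Aj Bj Ak Bk : Set V)
    (hbi : IsCompBipartition (ZeroOne G) Ci Ai Bi)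
    (hbj : IsCompBipartition (ZeroOne G) Cj Aj Bj)
    (hbk : IsCompBipartition (ZeroOne G) Ck Ak Bk)
    (hedge₁ : ∃ x ∈ Ai, ∃ y ∈ Aj, G.Adj x y)
    (hedge₂ : ∃ x ∈ Bi, ∃ y ∈ Bk, G.Adj x y) :
    ∃ x ∈ Aj, ∃ y ∈ Bk, G.Adj x y := by
  by_contra hcon
  push_neg at hcon
  obtain ⟨x₁, hx₁, y₁, hy₁, hadj₁⟩ := hedge₁
  obtain ⟨x₂, hx₂, y₂, hy₂, hadj₂⟩ := hedge₂
  -- memberships in supports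
  have hx₁C : x₁ ∈ Ci.supp := by rw [← hbi.1]; exact Or.inl hx₁
  have hx₂C : x₂ ∈ Ci.supp := by rw [← hbi.1]; exact Or.inr hx₂
  have hy₂C : y₂ ∈ Ck.supp := by rw [← hbk.1]; exact Or.inr hy₂
  have hx₁y₁ : x₁ ≠ y₁ := hadj₁.ne
  have hx₁y₂ : x₁ ≠ y₂ := by
    intro h
    apply hik
    rw [SimpleGraph.ConnectedComponent.mem_supp_iff] at hx₁C hy₂C
    rw [← hx₁C, h, hy₂C]
  -- the cover which is 0 exactly on y₁, y₂
  set h₁ : V → ℕ := fun v => if v = y₁ ∨ v = y₂ then 0 else 1 with hh₁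
  have hcov : IsCover G 1 h₁ := by
    constructor
    · intro h0
      have := congrFun h0 x₁
      simp only [hh₁, Pi.zero_apply] at this
      rw [if_neg (by tauto)] at this
      exact one_ne_zero this
    · intro i j hij'
      by_cases hi : i = y₁ ∨ i = y₂
      · by_cases hj : j = y₁ ∨ j = y₂
        · exfalso
          rcases hi with h | h <;> rcases hj with h' | h'
          · exact hij'.ne (h.trans h'.symm)
          · exact hcon y₁ hy₁ y₂ hy₂ (by rwa [h, h'] at hij')
          · exact hcon y₁ hy₁ y₂ hy₂ (by rw [h, h'] at hij'; exact hij'.symm)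
          · exact hij'.ne (h.trans h'.symm)
        · simp only [hh₁]
          rw [if_neg hj]
          omega
      · simp only [hh₁]
        rw [if_neg hi]
        omega
  obtain ⟨d, hd, hdle⟩ := exists_basic_le G 1 (∑ v, h₁ v) h₁ le_rfl hcov
  have hdy₁ : d y₁ = 0 := by
    have := hdle y₁
    simp [hh₁] at this
    omega
  have hdy₂ : d y₂ = 0 := by
    have := hdle y₂
    simp [hh₁] at this
    omega
  have hdx₁ : 1 ≤ d x₁ := by have := hd.1.2 x₁ y₁ hadj₁; omega
  have hdx₂ : 1 ≤ d x₂ := by have := hd.1.2 x₂ y₂ hadj₂; omega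
  -- x₁ and x₂ are in the same component of ZeroOne G
  have hreach : (ZeroOne G).Reachable x₁ x₂ := by
    rw [SimpleGraph.ConnectedComponent.mem_supp_iff] at hx₁C hx₂C
    exact SimpleGraph.ConnectedComponent.exact (hx₁C.trans hx₂C.symm)
  obtain ⟨p⟩ := hreach
  have hne : x₁ ≠ x₂ := by
    intro h
    exact Set.disjoint_left.mp hbi.2.1 hx₁ (h ▸ hx₂)
  have hdx₁' : d x₁ = 1 := by
    cases p with
    | nil => exact absurd rfl hne
    | cons hadj q =>
      have := hadj.2 d hd
      omega
  have hfin := walk_alternates G Ci Ai Bi hbi d hd x₁ x₂ p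
    (by rw [← hbi.1]; exact Or.inl hx₁) (Or.inl ⟨hx₁, hdx₁'⟩)
  rcases hfin with ⟨hA, _⟩ | ⟨_, h0⟩
  · exact Set.disjoint_left.mp hbi.2.1 hA hx₂
  · omega
end

section
/- Let G be a finite simple graph that is a domain, let H be a connected component of G^{0-1}, and let A ∪ B be the vertex bipartition of H. Then there exists a basic 1-cover a of G with a(v)=1 for all v ∈ A and a(v)=0 for all v ∈ B, such that the function b defined by b(v)=1−a(v) for vertices v of H and b(v)=a(v) for all other vertices is also a basic 1-cover of G (so b is 1 on B and 0 on A). -/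
variable {V : Type*} [Fintype V] [DecidableEq V]

section Aux

variable (G : SimpleGraph V)

lemma aux_ne_zero_iff {c : V → ℕ} : c ≠ 0 ↔ ∃ v, 1 ≤ c v := by
  rw [Function.ne_iff]
  constructor
  · rintro ⟨v, hv⟩; simp only [Pi.zero_apply] at hv; exact ⟨v, by omega⟩
  · rintro ⟨v, hv⟩; exact ⟨v, by simp only [Pi.zero_apply]; omega⟩

/-- values of a basic 1-cover are at most 1 (when `G` has an edge). -/
lemma aux_basic_le_one (hE : ∃ p q : V, G.Adj p q) {c : V → ℕ}
    (hc : IsBasicCover G 1 c) (v : V) : c v ≤ 1 := by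
  by_contra hlt
  push_neg at hlt
  apply hc.2
  refine ⟨fun w => if w = v then c v - 1 else c w, fun w => if w = v then 1 else 0,
    ⟨?_, ?_⟩, ⟨?_, fun i j _ => Nat.zero_le _⟩, ?_⟩
  · rw [aux_ne_zero_iff]; exact ⟨v, by simp; omega⟩
  · intro i j hij
    have h1 := hc.1.2 i j hij
    have hne := hij.ne
    by_cases hi : i = v <;> by_cases hj : j = v <;> simp [hi, hj] at hne ⊢ <;> omega
  · rw [aux_ne_zero_iff]; exact ⟨v, by simp⟩
  · funext w; by_cases hw : w = v <;> simp [hw] <;> omega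

/-- each vertex with positive value in a basic 1-cover has a neighbour with value 0. -/
lemma aux_basic_exists_zero_nbr (hE : ∃ p q : V, G.Adj p q) {c : V → ℕ}
    (hc : IsBasicCover G 1 c) {v : V} (hv : 1 ≤ c v) :
    ∃ w, G.Adj v w ∧ c w = 0 := by
  by_contra h
  push_neg at h
  have hnbr : ∀ w, G.Adj v w → 1 ≤ c w := fun w hw => Nat.one_le_iff_ne_zero.mpr (h w hw)
  apply hc.2
  refine ⟨fun w => if w = v then 0 else c w, fun w => if w = v then c v else 0,
    ⟨?_, ?_⟩, ⟨?_, fun i j _ => Nat.zero_le _⟩, ?_⟩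
  · -- nonzero: some vertex ≠ v has positive value
    rw [aux_ne_zero_iff]
    obtain ⟨p, q, hpq⟩ := hE
    by_cases hp : p = v
    · exact ⟨q, by simp [(hp ▸ hpq).ne']; exact hnbr q (hp ▸ hpq)⟩
    · by_cases hq : q = v
      · exact ⟨p, by simp [hp]; exact hnbr p (hq ▸ hpq.symm)⟩
      · have := hc.1.2 p q hpq
        rcases Nat.lt_or_ge (c p) 1 with h1 | h1
        · exact ⟨q, by simp [hq]; omega⟩
        · exact ⟨p, by simp [hp]; omega⟩
  · intro i j hij
    have hne := hij.ne
    by_cases hi : i = v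
    · have := hnbr j (hi ▸ hij); simp [hi, hij.ne', (hi ▸ hij).ne']
      omega
    · by_cases hj : j = v
      · have := hnbr i (hj ▸ hij.symm); simp [hi, hj]; omega
      · have := hc.1.2 i j hij; simp [hi, hj]; omega
  · rw [aux_ne_zero_iff]; exact ⟨v, by simp; omega⟩
  · funext w; by_cases hw : w = v <;> simp [hw]

/-- every 1-cover dominates a basic 1-cover. -/
lemma aux_exists_basic_le {c : V → ℕ} (hc : IsCover G 1 c) :
    ∃ a, IsBasicCover G 1 a ∧ ∀ v, a v ≤ c v := by
  obtain ⟨n, hn⟩ : ∃ n, ∑ v, c v = n := ⟨_, rfl⟩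
  induction n using Nat.strong_induction_on generalizing c with
  | _ n ih =>
    by_cases hbasic : IsBasicCover G 1 c
    · exact ⟨c, hbasic, fun v => le_refl _⟩
    · have : ∃ b d : V → ℕ, IsCover G 1 b ∧ IsCover G 0 d ∧ c = b + d := by
        by_contra hno; exact hbasic ⟨hc, hno⟩
      obtain ⟨b, d, hbc, hd, hcbd⟩ := this
      obtain ⟨v, hv⟩ := aux_ne_zero_iff.mp hd.1
      have hble : ∀ w, b w ≤ c w := fun w => by
        have := congrFun hcbd w; simp [Pi.add_apply] at this; omega
      have hlt : ∑ w, b w < n := by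
        rw [← hn]
        refine Finset.sum_lt_sum (fun w _ => hble w) ⟨v, Finset.mem_univ v, ?_⟩
        have := congrFun hcbd v; simp [Pi.add_apply] at this; omega
      obtain ⟨a, ha, hale⟩ := ih _ hlt hbc rfl
      exact ⟨a, ha, fun w => le_trans (hale w) (hble w)⟩

lemma aux_cover_compl_single (hE : ∃ p q : V, G.Adj p q) (w : V) :
    IsCover G 1 (fun v => if v = w then 0 else 1) := by
  constructor
  · rw [aux_ne_zero_iff]
    obtain ⟨p, q, hpq⟩ := hE
    by_cases hp : p = w
    · exact ⟨q, by simp [(hp ▸ hpq).ne']⟩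
    · exact ⟨p, by simp [hp]⟩
  · intro i j hij
    have hne := hij.ne
    by_cases hi : i = w <;> by_cases hj : j = w <;> simp [hi, hj] at hne ⊢

lemma aux_exists_basic_zero_at (hE : ∃ p q : V, G.Adj p q) (w : V) :
    ∃ a, IsBasicCover G 1 a ∧ a w = 0 := by
  obtain ⟨a, ha, hale⟩ := aux_exists_basic_le G (aux_cover_compl_single G hE w)
  exact ⟨a, ha, by have := hale w; simpa using this⟩

lemma aux_exists_basic_one_at (hE : ∃ p q : V, G.Adj p q) {v w : V} (hvw : G.Adj v w) :
    ∃ a, IsBasicCover G 1 a ∧ a v = 1 ∧ a w = 0 := by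
  obtain ⟨a, ha, hale⟩ := aux_exists_basic_le G (aux_cover_compl_single G hE w)
  have haw : a w = 0 := by have := hale w; simpa using this
  have h1 := ha.1.2 v w hvw
  have h2 := aux_basic_le_one G hE ha v
  exact ⟨a, ha, by omega, haw⟩

end Aux

section Partner

variable (G : SimpleGraph V)

/-- Key consequence of the domain property: every non-isolated vertex lies on an edge
on which every basic 1-cover has endpoint-sum exactly 1 (a "0-1 edge"). -/
lemma aux_exists_partner (hG : IsGraphDomain G) {v w0 : V} (hv : G.Adj v w0) :
    ∃ w, G.Adj v w ∧ ∀ c, IsBasicCover G 1 c → c v + c w = 1 := by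
  classical
  have hE : ∃ p q : V, G.Adj p q := ⟨v, w0, hv⟩
  obtain ⟨F, hmem, hbasicF⟩ : ∃ F : Finset (V → ℕ),
      (∀ c, IsBasicCover G 1 c → c ∈ F) ∧ (∀ c ∈ F, IsBasicCover G 1 c) := by
    refine ⟨((Finset.univ : Finset (V → Fin 2)).image (fun f v => ((f v : ℕ)))).filter
      (fun c => IsBasicCover G 1 c), ?_, ?_⟩
    · intro c hc
      refine Finset.mem_filter.mpr
        ⟨Finset.mem_image.mpr ⟨fun u => ⟨c u, ?_⟩, Finset.mem_univ _, rfl⟩, hc⟩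
      have := aux_basic_le_one G hE hc u; omega
    · exact fun c hc => (Finset.mem_filter.mp hc).2
  obtain ⟨f, hfb, hfsum⟩ : ∃ f : Fin F.card → V → ℕ,
      (∀ p, IsBasicCover G 1 (f p)) ∧ ∀ u, (∑ p, f p) u = ∑ c ∈ F, c u := by
    refine ⟨fun i => ((F.equivFin.symm i : F) : V → ℕ),
      fun p => hbasicF _ (F.equivFin.symm p).2, fun u => ?_⟩
    rw [Finset.sum_apply]
    have h1 : ∑ x : F, ((x : V → ℕ) u) = ∑ i, ((F.equivFin.symm i : F) : V → ℕ) u :=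
      Fintype.sum_equiv F.equivFin _ _ (fun x => by simp)
    rw [← h1, Finset.sum_coe_sort F (fun c => c u)]
  have hFne : F.Nonempty := by
    obtain ⟨a, ha, _⟩ := aux_exists_basic_zero_at G hE w0
    exact ⟨a, hmem a ha⟩
  have hs1 : 1 ≤ F.card + 0 := by
    have := Finset.card_pos.mpr hFne; omega
  have HB := hG F.card 0 hs1 f (fun i => i.elim0) hfb (fun q => q.elim0)
  obtain ⟨H, hHdef⟩ : ∃ H : V → ℕ, H = (∑ p, f p) + (∑ q : Fin 0, (fun i => i.elim0 : Fin 0 → V → ℕ) q) :=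
    ⟨_, rfl⟩
  rw [← hHdef] at HB
  have Hv : ∀ u, H u = ∑ c ∈ F, c u := by
    intro u
    rw [hHdef, Pi.add_apply, hfsum u]
    rw [Finset.univ_eq_empty, Finset.sum_empty, Pi.zero_apply, add_zero]
  have hcover : ∀ i j, G.Adj i j → F.card ≤ H i + H j := by
    intro i j hij
    have := HB.1.2 i j hij; omega
  have hval_pos : ∀ u z : V, G.Adj u z → 1 ≤ H u := by
    intro u z huz
    obtain ⟨a, ha, ha1, _⟩ := aux_exists_basic_one_at G hE huz
    have h2 : a u ≤ ∑ c ∈ F, c u :=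
      Finset.single_le_sum (fun c _ => Nat.zero_le (c u)) (hmem a ha)
    rw [Hv u, ← ha1]; exact h2
  have key : ∃ w, G.Adj v w ∧ H v + H w = F.card := by
    by_contra hno
    push_neg at hno
    apply HB.2
    have hHv1 : 1 ≤ H v := hval_pos v w0 hv
    refine ⟨fun u => if u = v then H v - 1 else H u, fun u => if u = v then 1 else 0,
      ⟨?_, ?_⟩, ⟨?_, fun i j _ => Nat.zero_le _⟩, ?_⟩
    · rw [aux_ne_zero_iff]
      refine ⟨w0, ?_⟩
      have : 1 ≤ H w0 := hval_pos w0 v hv.symm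
      simp [hv.ne']; omega
    · intro i j hij
      by_cases hi : i = v
      · have h1 := hcover i j hij
        have h2 := hno j (hi ▸ hij)
        subst hi
        simp [hij.ne', hij.ne'.symm]
        omega
      · by_cases hj : j = v
        · have h1 := hcover i j hij
          have h2 := hno i (hj ▸ hij.symm)
          subst hj
          simp [hi]
          omega
        · have h1 := hcover i j hij
          simp [hi, hj]
          omega
    · rw [aux_ne_zero_iff]; exact ⟨v, by simp⟩
    · funext u
      by_cases hu : u = v <;> simp [hu] <;> omega
  obtain ⟨w, hvw, hws⟩ := key
  refine ⟨w, hvw, ?_⟩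
  have htight : ∀ c ∈ F, c v + c w = 1 := by
    have hsum2 : ∑ c ∈ F, (c v + c w) = F.card := by
      rw [Finset.sum_add_distrib, ← Hv v, ← Hv w]
      exact hws
    intro c hc
    by_contra hne1
    have hge : ∀ d ∈ F, 1 ≤ d v + d w := fun d hd => (hbasicF d hd).1.2 v w hvw
    have hlt : ∑ _d ∈ F, 1 < ∑ d ∈ F, (d v + d w) :=
      Finset.sum_lt_sum hge ⟨c, hc, Nat.lt_of_le_of_ne (hge c hc) (Ne.symm hne1)⟩
    rw [Finset.sum_const, smul_eq_mul, mul_one, hsum2] at hlt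
    exact absurd hlt (lt_irrefl _)
  exact fun c hc => htight c (hmem c hc)

end Partner

section MinLemma

variable (G : SimpleGraph V)

lemma aux_basic_of_min {b : V → ℕ} (hcov : IsCover G 1 b) (hle : ∀ v, b v ≤ 1)
    (hmin : ∀ v, b v = 1 → ∃ w, G.Adj v w ∧ b w = 0) : IsBasicCover G 1 b := by
  refine ⟨hcov, ?_⟩
  rintro ⟨b', e, hb', he, heq⟩
  obtain ⟨v, hv⟩ := aux_ne_zero_iff.mp he.1
  have h1 : b v = b' v + e v := congrFun heq v
  have h2 := hle v
  have hbv : b v = 1 := by omega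
  obtain ⟨w, hvw, hw0⟩ := hmin v hbv
  have h3 : b w = b' w + e w := congrFun heq w
  have h4 := hb'.2 v w hvw
  omega

end MinLemma

/-- auxiliary predicate: `v` is outside `D` and "anti-correlated" (under all basic 1-covers)
with some vertex `u` outside `D` having a neighbour in `D`. -/
def AuxQ (G : SimpleGraph V) (D : Set V) (v : V) : Prop :=
  v ∉ D ∧ ∃ u, u ∉ D ∧ (∃ z ∈ D, G.Adj u z) ∧ ∀ c, IsBasicCover G 1 c → c u + c v = 1


/-- Let `G` be a domain, `H` a connected component of `G^{0-1}` with
bipartition `A ∪ B`.  Then there is a basic `1`-cover `a` of `G` which is `1` on `A` and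
`0` on `B`, such that the function `b` obtained from `a` by swapping its values on the
vertices of `H` (i.e. `b v = 1 - a v` for `v` in `H` and `b v = a v` elsewhere) is also a
basic `1`-cover of `G`. -/
theorem exists_basic_cover_swappable_on_component (G : SimpleGraph V)
    (hG : IsGraphDomain G)
    (C : (ZeroOne G).ConnectedComponent) (hC : C.supp ⊆ {v : V | ∃ w, G.Adj v w})
    (A B : Set V) (hb : IsCompBipartition (ZeroOne G) C A B) :
    ∃ a : V → ℕ, IsBasicCover G 1 a ∧ (∀ v ∈ A, a v = 1) ∧ (∀ v ∈ B, a v = 0) ∧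
      ∃ b : V → ℕ, IsBasicCover G 1 b ∧
        (∀ v ∈ C.supp, b v = 1 - a v) ∧ (∀ v ∉ C.supp, b v = a v) := by

  classical
  obtain ⟨hAB, hdisj, hiff⟩ := hb
  have hsupp_adj : ∀ {p q : V}, (ZeroOne G).Adj p q → p ∈ C.supp → q ∈ C.supp := by
    intro p q hpq hp
    rw [SimpleGraph.ConnectedComponent.mem_supp_iff] at hp ⊢
    rw [← hp]
    exact SimpleGraph.ConnectedComponent.sound hpq.symm.reachable
  obtain ⟨v₀, hv₀⟩ : ∃ v, v ∈ C.supp := by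
    obtain ⟨v, hv⟩ := Quot.exists_rep C
    exact ⟨v, by rw [SimpleGraph.ConnectedComponent.mem_supp_iff]; exact hv⟩
  have hNI : ∀ v ∈ C.supp, ∃ w, G.Adj v w := fun v hv => hC hv
  obtain ⟨w₀', hv₀w⟩ := hNI v₀ hv₀
  have hE : ∃ p q : V, G.Adj p q := ⟨v₀, w₀', hv₀w⟩
  have hA_supp : ∀ {x}, x ∈ A → x ∈ C.supp := fun {x} hx => by
    rw [← hAB]; exact Or.inl hx
  have hB_supp : ∀ {x}, x ∈ B → x ∈ C.supp := fun {x} hx => by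
    rw [← hAB]; exact Or.inr hx
  have hsupp_or : ∀ {x}, x ∈ C.supp → x ∈ A ∨ x ∈ B := fun {x} hx => by
    rw [← hAB] at hx; exact hx
  have hnAB : ∀ {x}, x ∈ A → x ∈ B → False := fun {x} hx hy =>
    Set.disjoint_left.mp hdisj hx hy
  -- get one vertex in A and one in B
  obtain ⟨p₀, hp₀adj, hp₀⟩ := aux_exists_partner G hG hv₀w
  have hZ₀ : (ZeroOne G).Adj v₀ p₀ := ⟨hp₀adj, hp₀⟩
  have hp₀supp : p₀ ∈ C.supp := hsupp_adj hZ₀ hv₀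
  obtain ⟨x₀, y₀, hx₀, hy₀⟩ : ∃ x₀ y₀, x₀ ∈ A ∧ y₀ ∈ B := by
    rcases (hiff v₀ hv₀ p₀ hp₀supp).mp hZ₀ with ⟨h1, h2⟩ | ⟨h1, h2⟩
    exacts [⟨v₀, p₀, h1, h2⟩, ⟨p₀, v₀, h2, h1⟩]
  have hZAB : ∀ {x y}, x ∈ A → y ∈ B → (ZeroOne G).Adj x y := fun {x y} hx hy =>
    (hiff x (hA_supp hx) y (hB_supp hy)).mpr (Or.inl ⟨hx, hy⟩)
  -- value lemmas
  have cle : ∀ c, IsBasicCover G 1 c → ∀ u, c u ≤ 1 := fun c hc => aux_basic_le_one G hE hc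
  have hvB : ∀ c, IsBasicCover G 1 c → ∀ y ∈ B, c x₀ + c y = 1 := fun c hc y hy =>
    (hZAB hx₀ hy).2 c hc
  have hvA : ∀ c, IsBasicCover G 1 c → ∀ x ∈ A, c x = c x₀ := by
    intro c hc x hx
    have h1 := (hZAB hx hy₀).2 c hc
    have h2 := (hZAB hx₀ hy₀).2 c hc
    omega
  -- A-type and B-type covers
  have hGxy : G.Adj x₀ y₀ := (hZAB hx₀ hy₀).1
  obtain ⟨aA, haA, haAx₀, -⟩ := aux_exists_basic_one_at G hE hGxy
  obtain ⟨aB, haB, haBx₀⟩ := aux_exists_basic_zero_at G hE x₀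
  -- forced values on outside neighbours of the component
  have forcedA : ∀ {u z}, G.Adj u z → z ∈ A → ∀ c, IsBasicCover G 1 c → c x₀ = 0 → c u = 1 := by
    intro u z huz hz c hc h0
    have h1 := hvA c hc z hz
    have h2 := hc.1.2 u z huz
    have h3 := cle c hc u
    omega
  have forcedB : ∀ {u z}, G.Adj u z → z ∈ B → ∀ c, IsBasicCover G 1 c → c x₀ = 1 → c u = 1 := by
    intro u z huz hz c hc h1
    have h2 := hvB c hc z hz
    have h3 := hc.1.2 u z huz
    have h4 := cle c hc u
    omega
  have not01 : ∀ {u z}, G.Adj u z → z ∈ C.supp → u ∉ C.supp →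
      (∀ c, IsBasicCover G 1 c → c z + c u = 1) → False := by
    intro u z huz hz hu hall
    exact hu (hsupp_adj ⟨huz.symm, hall⟩ hz)
  -- no two outside neighbours of the component are anti-correlated
  have lemS : ∀ {u z u' z' : V}, G.Adj u z → z ∈ C.supp → u ∉ C.supp →
      G.Adj u' z' → z' ∈ C.supp → u' ∉ C.supp →
      (∀ c, IsBasicCover G 1 c → c u + c u' = 1) → False := by
    intro u z u' z' huz hz hu hu'z' hz' hu' hall
    rcases hsupp_or hz with hzA | hzB <;> rcases hsupp_or hz' with hz'A | hz'B
    · have h1 := forcedA huz hzA aB haB haBx₀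
      have h2 := forcedA hu'z' hz'A aB haB haBx₀
      have h3 := hall aB haB; omega
    · refine not01 huz hz hu ?_
      intro c hc
      have hx := cle c hc x₀
      have hzval := hvA c hc z hzA
      rcases Nat.le_one_iff_eq_zero_or_eq_one.mp hx with h0 | h1
      · have h2 := forcedA huz hzA c hc h0; omega
      · have h2 := forcedB hu'z' hz'B c hc h1
        have h3 := hall c hc; omega
    · refine not01 hu'z' hz' hu' ?_
      intro c hc
      have hx := cle c hc x₀
      have hz'val := hvA c hc z' hz'A
      rcases Nat.le_one_iff_eq_zero_or_eq_one.mp hx with h0 | h1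
      · have h2 := forcedA hu'z' hz'A c hc h0; omega
      · have h2 := forcedB huz hzB c hc h1
        have h3 := hall c hc; omega
    · have h1 := forcedB huz hzB aA haA haAx₀
      have h2 := forcedB hu'z' hz'B aA haA haAx₀
      have h3 := hall aA haA; omega
  -- edge exclusion lemmas
  have exBB : ∀ {i j}, G.Adj i j → i ∈ B → j ∈ B → False := by
    intro i j hij hi hj
    have h1 := hvB aA haA i hi
    have h2 := hvB aA haA j hj
    have h3 := haA.1.2 i j hij
    omega
  have exBQ : ∀ {i j}, G.Adj i j → i ∈ B → AuxQ G C.supp j → False := by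
    intro i j hij hi hQ
    obtain ⟨hjD, u, huD, ⟨z, hz, huz⟩, hui⟩ := hQ
    rcases hsupp_or hz with hzA | hzB
    · refine not01 hij.symm (hB_supp hi) hjD ?_
      intro c hc
      have hx := cle c hc x₀
      have hiB := hvB c hc i hi
      rcases Nat.le_one_iff_eq_zero_or_eq_one.mp hx with h0 | h1
      · have hcu := forcedA huz hzA c hc h0
        have h2 := hui c hc; omega
      · have hcov := hc.1.2 i j hij
        have hcj := cle c hc j
        omega
    · have h1 := forcedB huz hzB aA haA haAx₀
      have h2 := hui aA haA
      have h3 := hvB aA haA i hi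
      have h4 := haA.1.2 i j hij
      omega
  have exQQ : ∀ {i j}, G.Adj i j → AuxQ G C.supp i → AuxQ G C.supp j → False := by
    intro i j hij hQi hQj
    obtain ⟨hiD, u, huD, ⟨z, hz, huz⟩, hui⟩ := hQi
    obtain ⟨hjD, u', hu'D, ⟨z', hz', hu'z'⟩, hu'j⟩ := hQj
    rcases hsupp_or hz with hzA | hzB <;> rcases hsupp_or hz' with hz'A | hz'B
    · have h1 := forcedA huz hzA aB haB haBx₀
      have h2 := forcedA hu'z' hz'A aB haB haBx₀
      have h3 := hui aB haB
      have h4 := hu'j aB haB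
      have h5 := haB.1.2 i j hij
      omega
    · -- z ∈ A, z' ∈ B
      refine lemS huz hz huD hu'z' hz' hu'D ?_
      intro c hc
      have hx := cle c hc x₀
      rcases Nat.le_one_iff_eq_zero_or_eq_one.mp hx with h0 | h1
      · have h2 := forcedA huz hzA c hc h0
        have h3 := hui c hc
        have h4 := hc.1.2 i j hij
        have h5 := cle c hc j
        have h6 := hu'j c hc
        omega
      · have h2 := forcedB hu'z' hz'B c hc h1
        have h3 := hu'j c hc
        have h4 := hc.1.2 i j hij
        have h5 := cle c hc i
        have h6 := hui c hc
        omega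
    · -- z ∈ B, z' ∈ A
      refine lemS huz hz huD hu'z' hz' hu'D ?_
      intro c hc
      have hx := cle c hc x₀
      rcases Nat.le_one_iff_eq_zero_or_eq_one.mp hx with h0 | h1
      · have h2 := forcedA hu'z' hz'A c hc h0
        have h3 := hu'j c hc
        have h4 := hc.1.2 i j hij
        have h5 := cle c hc i
        have h6 := hui c hc
        omega
      · have h2 := forcedB huz hzB c hc h1
        have h3 := hui c hc
        have h4 := hc.1.2 i j hij
        have h5 := cle c hc j
        have h6 := hu'j c hc
        omega
    · have h1 := forcedB huz hzB aA haA haAx₀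
      have h2 := forcedB hu'z' hz'B aA haA haAx₀
      have h3 := hui aA haA
      have h4 := hu'j aA haA
      have h5 := haA.1.2 i j hij
      omega
  -- the big (non-minimal) cover
  have hcov0 : IsCover G 1
      (fun v => if ((∃ w, G.Adj v w) ∧ v ∉ B ∧ ¬ AuxQ G C.supp v) then 1 else 0) := by
    constructor
    · rw [aux_ne_zero_iff]
      refine ⟨x₀, ?_⟩
      simp only [if_pos (show (∃ w, G.Adj x₀ w) ∧ x₀ ∉ B ∧ ¬ AuxQ G C.supp x₀ from
        ⟨hNI x₀ (hA_supp hx₀), fun h => hnAB hx₀ h, fun h => h.1 (hA_supp hx₀)⟩)]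
      exact le_refl 1
    · intro i j hij
      rcases Classical.em (i ∈ B ∨ AuxQ G C.supp i) with hi | hi
      · rcases Classical.em (j ∈ B ∨ AuxQ G C.supp j) with hj | hj
        · exfalso
          rcases hi with hiB | hiQ <;> rcases hj with hjB | hjQ
          · exact exBB hij hiB hjB
          · exact exBQ hij hiB hjQ
          · exact exBQ hij.symm hjB hiQ
          · exact exQQ hij hiQ hjQ
        · push_neg at hj
          simp only [if_pos (show (∃ w, G.Adj j w) ∧ j ∉ B ∧ ¬ AuxQ G C.supp j from
            ⟨⟨i, hij.symm⟩, hj.1, hj.2⟩)]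
          exact Nat.le_add_left 1 _
      · push_neg at hi
        simp only [if_pos (show (∃ w, G.Adj i w) ∧ i ∉ B ∧ ¬ AuxQ G C.supp i from
          ⟨⟨j, hij⟩, hi.1, hi.2⟩)]
        exact Nat.le_add_right 1 _
  obtain ⟨a, haBasic, hale⟩ := aux_exists_basic_le G hcov0
  have ale1 : ∀ v, a v ≤ 1 := cle a haBasic
  -- extraction of values of a
  have haQB0 : ∀ v, (v ∈ B ∨ AuxQ G C.supp v) → a v = 0 := by
    intro v hv
    have h := hale v
    simp only [if_neg (show ¬((∃ w, G.Adj v w) ∧ v ∉ B ∧ ¬ AuxQ G C.supp v) from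
      fun hcond => hv.elim (fun h1 => hcond.2.1 h1) (fun h1 => hcond.2.2 h1))] at h
    omega
  have haNI : ∀ v, a v = 1 → ∃ w, G.Adj v w := by
    intro v h1
    by_contra hno
    have h := hale v
    simp only [if_neg (show ¬((∃ w, G.Adj v w) ∧ v ∉ B ∧ ¬ AuxQ G C.supp v) from
      fun hcond => hno hcond.1)] at h
    omega
  have haB0 : ∀ y ∈ B, a y = 0 := fun y hy => haQB0 y (Or.inl hy)
  have haA1 : ∀ x ∈ A, a x = 1 := by
    intro x hx
    obtain ⟨w1, hw1⟩ := hNI x (hA_supp hx)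
    obtain ⟨w, hxw, hwval⟩ := aux_exists_partner G hG hw1
    have hZ : (ZeroOne G).Adj x w := ⟨hxw, hwval⟩
    have hw_supp : w ∈ C.supp := hsupp_adj hZ (hA_supp hx)
    have hwB : w ∈ B := by
      rcases (hiff x (hA_supp hx) w hw_supp).mp hZ with ⟨-, h⟩ | ⟨h, -⟩
      · exact h
      · exact absurd h (fun h => hnAB hx h)
    have h1 := hwval a haBasic
    have h2 := haQB0 w (Or.inl hwB)
    have h3 := ale1 x
    omega
  have haP1 : ∀ v u z, v ∉ C.supp → u ∉ C.supp → z ∈ C.supp → G.Adj u z →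
      (∀ c, IsBasicCover G 1 c → c u = c v) → (∃ w1, G.Adj v w1) → a v = 1 := by
    intro v u z hvD huD hz huz huv hvNI2
    obtain ⟨w1, hw1⟩ := hvNI2
    obtain ⟨w, hvw, hwval⟩ := aux_exists_partner G hG hw1
    have hwD : w ∉ C.supp := by
      intro hw_supp
      rcases hsupp_or hw_supp with hwA | hwB <;> rcases hsupp_or hz with hzA | hzB
      · refine not01 huz hz huD ?_
        intro c hc
        have h1 := hvA c hc w hwA
        have h2 := hwval c hc
        have h3 := huv c hc
        have h4 := hvA c hc z hzA
        omega
      · have h1 := forcedB huz hzB aA haA haAx₀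
        have h2 := hvA aA haA w hwA
        have h3 := hwval aA haA
        have h4 := huv aA haA
        omega
      · have h1 := forcedA huz hzA aB haB haBx₀
        have h2 := hvB aB haB w hwB
        have h3 := hwval aB haB
        have h4 := huv aB haB
        omega
      · refine not01 huz hz huD ?_
        intro c hc
        have h1 := hvB c hc w hwB
        have h2 := hvB c hc z hzB
        have h3 := hwval c hc
        have h4 := huv c hc
        have h5 := cle c hc x₀
        omega
    have hwQ : AuxQ G C.supp w :=
      ⟨hwD, u, huD, ⟨z, hz, huz⟩, fun c hc => by
        have h1 := hwval c hc
        have h2 := huv c hc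
        omega⟩
    have h1 := hwval a haBasic
    have h2 := haQB0 w (Or.inr hwQ)
    have h3 := ale1 v
    omega
  have haN1 : ∀ u z, u ∉ C.supp → z ∈ C.supp → G.Adj u z → a u = 1 :=
    fun u z huD hz huz => haP1 u u z huD huD hz huz (fun c _ => rfl) ⟨z, huz⟩
  -- assemble b
  refine ⟨a, haBasic, haA1, haB0,
    fun v => if v ∈ C.supp then 1 - a v else a v, ?_,
    fun v hv => if_pos hv, fun v hv => if_neg hv⟩
  have hbcov : IsCover G 1 (fun v => if v ∈ C.supp then 1 - a v else a v) := by
    constructor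
    · rw [aux_ne_zero_iff]
      refine ⟨y₀, ?_⟩
      simp only [if_pos (hB_supp hy₀), haB0 y₀ hy₀]
      exact le_refl 1
    · intro i j hij
      rcases Classical.em (i ∈ C.supp) with hi | hi <;>
        rcases Classical.em (j ∈ C.supp) with hj | hj
      · simp only [if_pos hi, if_pos hj]
        rcases hsupp_or hi with hiA | hiB <;> rcases hsupp_or hj with hjA | hjB
        · exfalso
          have h1 := hvA aB haB i hiA
          have h2 := hvA aB haB j hjA
          have h3 := haB.1.2 i j hij
          omega
        · have h1 := haB0 j hjB
          have h2 := ale1 i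
          omega
        · have h1 := haB0 i hiB
          have h2 := ale1 j
          omega
        · exact absurd (exBB hij hiB hjB) id
      · simp only [if_pos hi, if_neg hj]
        have h1 := haN1 j i hj hi hij.symm
        omega
      · simp only [if_neg hi, if_pos hj]
        have h1 := haN1 i j hi hj hij
        omega
      · simp only [if_neg hi, if_neg hj]
        exact haBasic.1.2 i j hij
  have hble : ∀ v, (fun v => if v ∈ C.supp then 1 - a v else a v) v ≤ 1 := by
    intro v
    rcases Classical.em (v ∈ C.supp) with hv | hv
    · simp only [if_pos hv]; omega
    · simp only [if_neg hv]; exact ale1 v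
  have hbmin : ∀ v, (fun v => if v ∈ C.supp then 1 - a v else a v) v = 1 →
      ∃ w, G.Adj v w ∧ (fun v => if v ∈ C.supp then 1 - a v else a v) w = 0 := by
    intro v hv1
    simp only at hv1
    rcases Classical.em (v ∈ C.supp) with hvD | hvD
    · simp only [if_pos hvD] at hv1
      have hav : a v = 0 := by have := ale1 v; omega
      have hvB2 : v ∈ B := by
        rcases hsupp_or hvD with hA1 | hB1
        · exact absurd (haA1 v hA1) (by omega)
        · exact hB1
      obtain ⟨w1, hw1⟩ := hNI v hvD
      obtain ⟨w, hvw, hwval⟩ := aux_exists_partner G hG hw1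
      have hZ : (ZeroOne G).Adj v w := ⟨hvw, hwval⟩
      have hw_supp := hsupp_adj hZ hvD
      have hwA : w ∈ A := by
        rcases (hiff v hvD w hw_supp).mp hZ with ⟨h, -⟩ | ⟨-, h⟩
        · exact absurd h (fun h => hnAB h hvB2)
        · exact h
      refine ⟨w, hvw, ?_⟩
      simp only [if_pos hw_supp, haA1 w hwA]
    · simp only [if_neg hvD] at hv1
      obtain ⟨w1, hw1⟩ := haNI v hv1
      obtain ⟨w, hvw, hwval⟩ := aux_exists_partner G hG hw1
      have haw : a w = 0 := by have := hwval a haBasic; omega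
      have hwD : w ∉ C.supp := by
        intro hw
        exact hvD (hsupp_adj (SimpleGraph.Adj.symm (G := ZeroOne G) ⟨hvw, hwval⟩) hw)
      refine ⟨w, hvw, ?_⟩
      simp only [if_neg hwD]
      exact haw
  exact aux_basic_of_min G hbcov hble hbmin
end

section
/- Let G be a finite simple graph with at least one vertex and no isolated vertices. If G is an unmixed domain, then every connected component of G^{0-1} is a complete bipartite graph K_{a,a} for some integer a ≥ 1; that is, each component has a vertex bipartition A ∪ B with |A| = |B| ≥ 1 whose edges are exactly the pairs {x,y} with x ∈ A and y ∈ B. -/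
variable {V : Type*} [Fintype V] [DecidableEq V]

set_option linter.unusedSectionVars false

namespace Kaa

open Finset

variable {G : SimpleGraph V}

/-- indicator function of a finset -/
def Ind (M : Finset V) : V → ℕ := fun v => if v ∈ M then 1 else 0

lemma ind_mem {M : Finset V} {v : V} (h : v ∈ M) : Ind M v = 1 := if_pos h
lemma ind_not_mem {M : Finset V} {v : V} (h : v ∉ M) : Ind M v = 0 := if_neg h

/-- minimal vertex cover, as a finset -/
def MinCov (G : SimpleGraph V) (M : Finset V) : Prop :=
  (∀ ⦃u w : V⦄, G.Adj u w → u ∈ M ∨ w ∈ M) ∧ ∀ v ∈ M, ∃ w, G.Adj v w ∧ w ∉ M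

lemma ind_sum_ge {M : Finset V} (hM : MinCov G M) {u w : V} (h : G.Adj u w) :
    1 ≤ Ind M u + Ind M w := by
  rcases hM.1 h with h' | h'
  · rw [ind_mem h']; omega
  · rw [ind_mem h']; omega

lemma cover_ind {M : Finset V} (hM : MinCov G M) (hNe : M.Nonempty) :
    IsCover G 1 (Ind M) := by
  refine ⟨?_, fun i j h => ind_sum_ge hM h⟩
  obtain ⟨v, hv⟩ := hNe
  intro h0
  have : Ind M v = 0 := congrFun h0 v
  rw [ind_mem hv] at this
  exact one_ne_zero this

lemma basic_ind {M : Finset V} (hM : MinCov G M) (hNe : M.Nonempty) :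
    IsBasicCover G 1 (Ind M) := by
  refine ⟨cover_ind hM hNe, ?_⟩
  rintro ⟨b, c, hb, hc, heq⟩
  obtain ⟨v, hv⟩ : ∃ v, c v ≠ 0 := by
    by_contra h
    push_neg at h
    exact hc.1 (funext h)
  have hbv : b v + c v = Ind M v := (congrFun heq v).symm
  have hvM : v ∈ M := by
    by_contra hvM
    rw [ind_not_mem hvM] at hbv
    omega
  obtain ⟨w, hadj, hwM⟩ := hM.2 v hvM
  have hbw : b v + c v = 1 := by rw [hbv, ind_mem hvM]
  have hcw : b w + c w = Ind M w := (congrFun heq w).symm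
  rw [ind_not_mem hwM] at hcw
  have := hb.2 v w hadj
  omega

lemma basic_le_one {a : V → ℕ}
    (h : IsBasicCover G 1 a) (v : V) : a v ≤ 1 := by
  by_contra hv
  push_neg at hv
  apply h.2
  refine ⟨Function.update a v (a v - 1), Pi.single v 1, ⟨?_, ?_⟩, ⟨?_, fun i j _ => Nat.zero_le _⟩, ?_⟩
  · intro h0
    have : Function.update a v (a v - 1) v = 0 := congrFun h0 v
    rw [Function.update_self] at this
    omega
  · intro i j hij
    have h2 := h.1.2 i j hij
    rcases eq_or_ne i v with h1 | h1
    · subst h1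
      rw [Function.update_self, Function.update_of_ne hij.ne']
      omega
    · rw [Function.update_of_ne h1]
      rcases eq_or_ne j v with hj | hj
      · subst hj
        rw [Function.update_self]
        omega
      · rw [Function.update_of_ne hj]
        exact h2
  · intro h0
    have : Pi.single v 1 v = 0 := congrFun h0 v
    rw [Pi.single_eq_same] at this
    exact one_ne_zero this
  · funext u
    rcases eq_or_ne u v with rfl | hu
    · simp only [Pi.add_apply, Function.update_self, Pi.single_eq_same]
      omega
    · simp only [Pi.add_apply, Function.update_of_ne hu, Pi.single_eq_of_ne hu]
      omega

open Classical in
/-- the minimal-cover finset attached to a basic 1-cover -/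
noncomputable def covOf (a : V → ℕ) : Finset V := univ.filter (fun v => a v ≠ 0)

lemma mem_covOf {a : V → ℕ} {v : V} : v ∈ covOf a ↔ a v ≠ 0 := by
  classical
  simp [covOf]

lemma basic_toMin {a : V → ℕ} (hiso : ∀ v : V, ∃ w, G.Adj v w)
    (h : IsBasicCover G 1 a) : MinCov G (covOf a) ∧ a = Ind (covOf a) := by
  constructor
  · constructor
    · intro u w hadj
      have := h.1.2 u w hadj
      rw [mem_covOf, mem_covOf]
      omega
    · intro v hv
      rw [mem_covOf] at hv
      by_contra hcon
      push_neg at hcon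
      apply h.2
      have hav : a v = 1 := by have := basic_le_one h v; omega
      refine ⟨Function.update a v 0, Pi.single v 1, ⟨?_, ?_⟩,
        ⟨?_, fun i j _ => Nat.zero_le _⟩, ?_⟩
      · obtain ⟨w, hw⟩ := hiso v
        have hwv : w ≠ v := hw.ne'
        have hw' := hcon w hw
        rw [mem_covOf] at hw'
        intro h0
        have : Function.update a v 0 w = 0 := congrFun h0 w
        rw [Function.update_of_ne hwv] at this
        exact hw' this
      · intro i j hij
        have h2 := h.1.2 i j hij
        rcases eq_or_ne i v with h1 | h1
        · subst h1
          have hj' := hcon j hij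
          rw [mem_covOf] at hj'
          rw [Function.update_self, Function.update_of_ne hij.ne']
          omega
        · rw [Function.update_of_ne h1]
          rcases eq_or_ne j v with hj | hj
          · subst hj
            have hi' := hcon i hij.symm
            rw [mem_covOf] at hi'
            rw [Function.update_self]
            omega
          · rw [Function.update_of_ne hj]
            exact h2
      · intro h0
        have : Pi.single v 1 v = 0 := congrFun h0 v
        rw [Pi.single_eq_same] at this
        exact one_ne_zero this
      · funext u
        rcases eq_or_ne u v with rfl | hu
        · simp only [Pi.add_apply, Function.update_self, Pi.single_eq_same]
          omega
        · simp only [Pi.add_apply, Function.update_of_ne hu, Pi.single_eq_of_ne hu]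
          omega
  · funext v
    rcases eq_or_ne (a v) 0 with h0 | h0
    · rw [h0, ind_not_mem]
      rw [mem_covOf]
      omega
    · have : a v = 1 := by have := basic_le_one h v; omega
      rw [this, ind_mem]
      rw [mem_covOf]
      omega

/-- independence for finsets -/
def IndepF (G : SimpleGraph V) (I : Finset V) : Prop :=
  ∀ u ∈ I, ∀ w ∈ I, ¬ G.Adj u w

lemma exists_maximal_indep {I₀ : Finset V} (h : IndepF G I₀) :
    ∃ I : Finset V, I₀ ⊆ I ∧ IndepF G I ∧ ∀ z ∉ I, ∃ u ∈ I, G.Adj z u := by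
  classical
  set 𝒮 : Finset (Finset V) := univ.powerset.filter (fun J => IndepF G J ∧ I₀ ⊆ J) with h𝒮
  have hne : 𝒮.Nonempty := ⟨I₀, by simp [h𝒮, h]⟩
  obtain ⟨I, hI, hImax⟩ := 𝒮.exists_max_image Finset.card hne
  rw [h𝒮, mem_filter] at hI
  refine ⟨I, hI.2.2, hI.2.1, ?_⟩
  intro z hz
  by_contra hcon
  push_neg at hcon
  have hins : IndepF G (insert z I) := by
    intro u hu w hw hadj
    rcases Finset.mem_insert.1 hu with hu1 | hu1
    · rcases Finset.mem_insert.1 hw with hw1 | hw1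
      · subst hu1; subst hw1; exact G.loopless.irrefl _ hadj
      · subst hu1; exact hcon w hw1 hadj
    · rcases Finset.mem_insert.1 hw with hw1 | hw1
      · subst hw1; exact hcon u hu1 hadj.symm
      · exact hI.2.1 u hu1 w hw1 hadj
  have hmem : insert z I ∈ 𝒮 := by
    rw [h𝒮, mem_filter]
    exact ⟨Finset.mem_powerset.2 (Finset.subset_univ _), hins,
      hI.2.2.trans (Finset.subset_insert _ _)⟩
  have := hImax _ hmem
  rw [Finset.card_insert_of_notMem hz] at this
  omega

lemma compl_minCov {I : Finset V} (hind : IndepF G I)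
    (hmax : ∀ z ∉ I, ∃ u ∈ I, G.Adj z u) : MinCov G (univ \ I) := by
  constructor
  · intro u w hadj
    by_contra hcon
    push_neg at hcon
    rcases hcon with ⟨hu, hw⟩
    simp only [Finset.mem_sdiff, Finset.mem_univ, true_and, not_not] at hu hw
    exact hind u hu w hw hadj
  · intro v hv
    simp only [Finset.mem_sdiff, Finset.mem_univ, true_and] at hv
    obtain ⟨u, hu, hadj⟩ := hmax v hv
    exact ⟨u, hadj, by simp [Finset.mem_sdiff, hu]⟩

lemma exists_minCov_mem (hiso : ∀ v : V, ∃ w, G.Adj v w) (v : V) :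
    ∃ M : Finset V, MinCov G M ∧ v ∈ M := by
  obtain ⟨w, hw⟩ := hiso v
  have h0 : IndepF G {w} := by
    intro u hu x hx
    rw [Finset.mem_singleton] at hu hx
    subst hu; subst hx
    exact G.loopless.irrefl _
  obtain ⟨I, hsub, hind, hmax⟩ := exists_maximal_indep h0
  refine ⟨univ \ I, compl_minCov hind hmax, ?_⟩
  simp only [Finset.mem_sdiff, Finset.mem_univ, true_and]
  intro hvI
  exact hind v hvI w (hsub (Finset.mem_singleton_self w)) hw

lemma exists_minCov_not_mem (v : V) :
    ∃ M : Finset V, MinCov G M ∧ v ∉ M := by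
  have h0 : IndepF G {v} := by
    intro u hu x hx
    rw [Finset.mem_singleton] at hu hx
    subst hu; subst hx
    exact G.loopless.irrefl _
  obtain ⟨I, hsub, hind, hmax⟩ := exists_maximal_indep h0
  refine ⟨univ \ I, compl_minCov hind hmax, ?_⟩
  simp [Finset.mem_sdiff, hsub (Finset.mem_singleton_self v)]

lemma minCov_nonempty [Nonempty V] (hiso : ∀ v : V, ∃ w, G.Adj v w)
    {M : Finset V} (hM : MinCov G M) : M.Nonempty := by
  obtain ⟨v⟩ := ‹Nonempty V›
  obtain ⟨w, hw⟩ := hiso v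
  rcases hM.1 hw with h | h
  · exact ⟨v, h⟩
  · exact ⟨w, h⟩

lemma ind_split {M : Finset V} {u w : V} (h1 : Ind M u + Ind M w = 1) :
    u ∈ M ↔ w ∉ M := by
  by_cases hu : u ∈ M <;> by_cases hw : w ∈ M <;>
    [skip; skip; skip; skip] <;>
    first
    | (rw [ind_mem hu, ind_mem hw] at h1; omega)
    | (rw [ind_not_mem hu, ind_not_mem hw] at h1; omega)
    | simp [hu, hw]

lemma split_ind {M : Finset V} {u w : V} (h : u ∈ M ↔ w ∉ M) :
    Ind M u + Ind M w = 1 := by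
  by_cases hu : u ∈ M
  · have hw : w ∉ M := h.1 hu
    rw [ind_mem hu, ind_not_mem hw]
  · have hw : w ∈ M := by by_contra hw; exact hu (h.2 hw)
    rw [ind_not_mem hu, ind_mem hw]

lemma zeroOne_adj_iff [Nonempty V] (hiso : ∀ v : V, ∃ w, G.Adj v w) {u w : V} :
    (ZeroOne G).Adj u w ↔ G.Adj u w ∧ ∀ M : Finset V, MinCov G M → (u ∈ M ↔ w ∉ M) := by
  constructor
  · rintro ⟨hadj, hall⟩
    refine ⟨hadj, fun M hM => ?_⟩
    exact ind_split (hall (Ind M) (basic_ind hM (minCov_nonempty hiso hM)))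
  · rintro ⟨hadj, hall⟩
    refine ⟨hadj, fun a ha => ?_⟩
    obtain ⟨hM, heq⟩ := basic_toMin hiso ha
    rw [heq]
    exact split_ind (hall _ hM)

lemma sum_le_card_all_one {n : ℕ} (t : Fin n → ℕ) (h1 : ∀ p, 1 ≤ t p)
    (h2 : ∑ p, t p ≤ n) (p : Fin n) : t p = 1 := by
  have hc : ∑ _p : Fin n, 1 = n := by simp
  have hle : ∑ _p : Fin n, 1 ≤ ∑ p, t p := Finset.sum_le_sum (fun i _ => h1 i)
  have heq : ∑ _p : Fin n, (1:ℕ) = ∑ p, t p := le_antisymm hle (by omega)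
  have := (Finset.sum_eq_sum_iff_of_le (fun i _ => h1 i)).1 heq
  exact ((this p (Finset.mem_univ p))).symm

/-- Every vertex has a `0-1`-partner: the key consequence of being a domain. -/
lemma exists_zo_partner [Nonempty V] (hiso : ∀ v : V, ∃ w, G.Adj v w)
    (hd : IsGraphDomain G) (v : V) :
    ∃ w, G.Adj v w ∧ ∀ M : Finset V, MinCov G M → (v ∈ M ↔ w ∉ M) := by
  classical
  set 𝒞 : Finset (Finset V) := univ.filter (fun M => MinCov G M) with h𝒞
  have hmem𝒞 : ∀ M : Finset V, M ∈ 𝒞 ↔ MinCov G M := by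
    intro M; simp [h𝒞]
  set s := 𝒞.card with hs
  have hsne : 1 ≤ s := by
    obtain ⟨M, hM, _⟩ := exists_minCov_mem hiso (Classical.arbitrary V)
    have : M ∈ 𝒞 := (hmem𝒞 M).2 hM
    have := Finset.card_pos.2 ⟨M, this⟩
    omega
  set e : Fin s ≃ {x // x ∈ 𝒞} := 𝒞.equivFin.symm with he
  set f : Fin s → V → ℕ := fun p => Ind ((e p : Finset V)) with hf
  have hfb : ∀ p, IsBasicCover G 1 (f p) := by
    intro p
    have hM : MinCov G (e p : Finset V) := (hmem𝒞 _).1 (e p).2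
    exact basic_ind hM (minCov_nonempty hiso hM)
  have hdom := hd s 0 (by omega) f (fun q => Fin.elim0 q) hfb (fun q => Fin.elim0 q)
  have hzero : (∑ q : Fin 0, Fin.elim0 q : V → ℕ) = 0 := by
    simp
  rw [hzero, add_zero] at hdom
  have hs20 : s + 2 * 0 = s := by omega
  rw [hs20] at hdom
  set a : V → ℕ := ∑ p, f p with ha
  have haval : ∀ u : V, a u = ∑ p : Fin s, Ind ((e p : Finset V)) u := by
    intro u
    rw [ha]
    simp [hf, Finset.sum_apply]
  -- every vertex is in some minimal cover, so a ≥ 1 everywhere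
  have hge1 : ∀ u : V, 1 ≤ a u := by
    intro u
    obtain ⟨M, hM, huM⟩ := exists_minCov_mem hiso u
    have hM𝒞 : M ∈ 𝒞 := (hmem𝒞 M).2 hM
    set p := e.symm ⟨M, hM𝒞⟩ with hp
    have hep : (e p : Finset V) = M := by rw [hp, Equiv.apply_symm_apply]
    rw [haval]
    calc (1:ℕ) = Ind ((e p : Finset V)) u := by rw [hep, ind_mem huM]
    _ ≤ ∑ p : Fin s, Ind ((e p : Finset V)) u :=
      Finset.single_le_sum (f := fun p : Fin s => Ind ((e p : Finset V)) u)
        (fun i _ => Nat.zero_le _) (Finset.mem_univ p)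
  have hedge : ∀ u u' : V, G.Adj u u' → s ≤ a u + a u' := by
    intro u u' hadj
    rw [haval, haval, ← Finset.sum_add_distrib]
    calc s = ∑ _p : Fin s, 1 := by simp
    _ ≤ _ := Finset.sum_le_sum (fun p _ =>
        ind_sum_ge ((hmem𝒞 _).1 (e p).2) hadj)
  -- basicness gives an edge where the sum is exactly s
  have hkey : ∃ w, G.Adj v w ∧ a v + a w ≤ s := by
    by_contra hcon
    push_neg at hcon
    apply hdom.2
    refine ⟨Function.update a v (a v - 1), Pi.single v 1, ⟨?_, ?_⟩,
      ⟨?_, fun i j _ => Nat.zero_le _⟩, ?_⟩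
    · obtain ⟨w, hw⟩ := hiso v
      intro h0
      have : Function.update a v (a v - 1) w = 0 := congrFun h0 w
      rw [Function.update_of_ne hw.ne'] at this
      have := hge1 w
      omega
    · intro i j hij
      rcases eq_or_ne i v with h1 | h1
      · subst h1
        have h2 := hcon j hij
        rw [Function.update_self, Function.update_of_ne hij.ne']
        omega
      · rw [Function.update_of_ne h1]
        rcases eq_or_ne j v with hj | hj
        · subst hj
          have h2 := hcon i hij.symm
          rw [Function.update_self]
          omega
        · rw [Function.update_of_ne hj]
          exact hedge i j hij
    · intro h0
      have : Pi.single v 1 v = 0 := congrFun h0 v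
      rw [Pi.single_eq_same] at this
      exact one_ne_zero this
    · funext u
      rcases eq_or_ne u v with rfl | hu
      · simp only [Pi.add_apply, Function.update_self, Pi.single_eq_same]
        have := hge1 u
        omega
      · simp only [Pi.add_apply, Function.update_of_ne hu, Pi.single_eq_of_ne hu]
        omega
  obtain ⟨w, hadj, hsum⟩ := hkey
  refine ⟨w, hadj, fun M hM => ?_⟩
  have hM𝒞 : M ∈ 𝒞 := (hmem𝒞 M).2 hM
  set t : Fin s → ℕ := fun p => Ind ((e p : Finset V)) v + Ind ((e p : Finset V)) w with ht
  have hsum' : ∑ p, t p ≤ s := by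
    rw [ht]
    rw [Finset.sum_add_distrib]
    rw [haval, haval] at hsum
    omega
  have hone : t (e.symm ⟨M, hM𝒞⟩) = 1 := by
    apply sum_le_card_all_one t
    · intro p
      exact ind_sum_ge ((hmem𝒞 _).1 (e p).2) hadj
    · exact hsum'
  rw [ht] at hone
  simp only [Equiv.apply_symm_apply] at hone
  exact ind_split hone

lemma sum_ind (M : Finset V) : ∑ u, Ind M u = M.card := by
  rw [show (∑ u, Ind M u) = ∑ u ∈ univ, if u ∈ M then 1 else 0 from rfl]
  rw [Finset.sum_ite_mem]
  simp

lemma minCov_card_eq [Nonempty V] (hiso : ∀ v : V, ∃ w, G.Adj v w)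
    (hu : IsUnmixed G) {M M' : Finset V} (hM : MinCov G M) (hM' : MinCov G M') :
    M.card = M'.card := by
  have := hu (Ind M) (Ind M') (basic_ind hM (minCov_nonempty hiso hM))
    (basic_ind hM' (minCov_nonempty hiso hM'))
  rwa [sum_ind, sum_ind] at this

open Classical in
/-- vertices forced into every minimal cover satisfying `pred` -/
noncomputable def Rp (G : SimpleGraph V) (pred : Finset V → Prop) : Finset V :=
  univ.filter (fun v => ∀ M : Finset V, MinCov G M → pred M → v ∈ M)

open Classical in
/-- vertices forced out of every minimal cover satisfying `pred` -/
noncomputable def Rp' (G : SimpleGraph V) (pred : Finset V → Prop) : Finset V :=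
  univ.filter (fun v => ∀ M : Finset V, MinCov G M → pred M → v ∉ M)

lemma mem_Rp {pred : Finset V → Prop} {v : V} :
    v ∈ Rp G pred ↔ ∀ M : Finset V, MinCov G M → pred M → v ∈ M := by
  classical
  simp [Rp]

lemma mem_Rp' {pred : Finset V → Prop} {v : V} :
    v ∈ Rp' G pred ↔ ∀ M : Finset V, MinCov G M → pred M → v ∉ M := by
  classical
  simp [Rp']

lemma flip_minCov [Nonempty V] (hiso : ∀ v : V, ∃ w, G.Adj v w)
    (hd : IsGraphDomain G) {pred : Finset V → Prop}
    (hex : ∃ M : Finset V, MinCov G M ∧ pred M)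
    {D : Finset V} (hD : MinCov G D) :
    MinCov G ((D \ Rp' G pred) ∪ Rp G pred) := by
  obtain ⟨M₀, hM₀, hpM₀⟩ := hex
  constructor
  · intro u w hadj
    by_contra hcon
    push_neg at hcon
    obtain ⟨hu, hw⟩ := hcon
    simp only [Finset.mem_union, Finset.mem_sdiff, not_or, not_and, not_not] at hu hw
    by_cases huR' : u ∈ Rp' G pred
    · have : w ∈ Rp G pred := by
        rw [mem_Rp]
        intro M hM hpM
        rcases hM.1 hadj with h | h
        · exact absurd h (mem_Rp'.1 huR' M hM hpM)
        · exact h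
      exact hw.2 this
    · by_cases hwR' : w ∈ Rp' G pred
      · have : u ∈ Rp G pred := by
          rw [mem_Rp]
          intro M hM hpM
          rcases hM.1 hadj with h | h
          · exact h
          · exact absurd h (mem_Rp'.1 hwR' M hM hpM)
        exact hu.2 this
      · have hu' : u ∉ D := fun h => hwR' (by exact absurd (hu.1 h) huR')
        have hw' : w ∉ D := fun h => huR' (by exact absurd (hw.1 h) hwR')
        rcases hD.1 hadj with h | h
        · exact hu' h
        · exact hw' h
  · intro v hv
    obtain ⟨w, hadjw, hsplit⟩ := exists_zo_partner hiso hd v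
    refine ⟨w, hadjw, ?_⟩
    simp only [Finset.mem_union, Finset.mem_sdiff, not_or, not_and, not_not]
    rcases Finset.mem_union.1 hv with hv1 | hv1
    · -- v ∈ D \ Rp'
      rw [Finset.mem_sdiff] at hv1
      constructor
      · intro hwD
        by_contra hwR'
        -- w ∈ D and v ∈ D, but every min cover splits {v, w}
        exact ((hsplit D hD).1 hv1.1) hwD
      · intro hwR
        -- w forced in every pred-cover, so v forced out: v ∈ Rp', contradiction
        apply hv1.2
        rw [mem_Rp']
        intro M hM hpM hvM
        exact ((hsplit M hM).1 hvM) (mem_Rp.1 hwR M hM hpM)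
    · -- v ∈ Rp
      have hvR := mem_Rp.1 hv1
      have hwR' : w ∈ Rp' G pred := by
        rw [mem_Rp']
        intro M hM hpM
        exact (hsplit M hM).1 (hvR M hM hpM)
      constructor
      · intro _
        exact hwR'
      · intro hwR
        exact ((mem_Rp'.1 hwR' M₀ hM₀ hpM₀) (mem_Rp.1 hwR M₀ hM₀ hpM₀)).elim

lemma card_sdiff_eq_of_card_eq {X Y : Finset V} (h : X.card = Y.card) :
    (X \ Y).card = (Y \ X).card := by
  have h1 : (X \ Y).card + (X ∩ Y).card = X.card := by
    rw [Finset.card_sdiff_add_card_inter]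
  have h2 : (Y \ X).card + (Y ∩ X).card = Y.card := by
    rw [Finset.card_sdiff_add_card_inter]
  rw [Finset.inter_comm] at h2
  omega

set_option maxHeartbeats 1000000 in
/-- The key counting lemma: |K| = |K'| -/
lemma K_card_eq [Nonempty V] (hiso : ∀ v : V, ∃ w, G.Adj v w)
    (hu : IsUnmixed G) (hd : IsGraphDomain G) (x : V) :
    ((Rp G (fun M => x ∈ M) ∩ Rp' G (fun M => x ∉ M)).card : ℕ) =
      (Rp' G (fun M => x ∈ M) ∩ Rp G (fun M => x ∉ M)).card := by
  classical
  obtain ⟨R, hR⟩ : ∃ R, R = Rp G (fun M => x ∈ M) := ⟨_, rfl⟩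
  obtain ⟨R', hR'⟩ : ∃ R', R' = Rp' G (fun M => x ∈ M) := ⟨_, rfl⟩
  obtain ⟨S, hS⟩ : ∃ S, S = Rp G (fun M => x ∉ M) := ⟨_, rfl⟩
  obtain ⟨S', hS'⟩ : ∃ S', S' = Rp' G (fun M => x ∉ M) := ⟨_, rfl⟩
  rw [← hR, ← hR', ← hS, ← hS']
  obtain ⟨q, hq, hxq⟩ := exists_minCov_not_mem (G := G) x
  obtain ⟨Mx, hMx, hxMx⟩ := exists_minCov_mem hiso x
  -- pointwise facts
  have memR : ∀ v, v ∈ R ↔ ∀ M : Finset V, MinCov G M → x ∈ M → v ∈ M := by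
    intro v; rw [hR]; exact mem_Rp
  have memR' : ∀ v, v ∈ R' ↔ ∀ M : Finset V, MinCov G M → x ∈ M → v ∉ M := by
    intro v; rw [hR']; exact mem_Rp'
  have memS : ∀ v, v ∈ S ↔ ∀ M : Finset V, MinCov G M → x ∉ M → v ∈ M := by
    intro v; rw [hS]; exact mem_Rp
  have memS' : ∀ v, v ∈ S' ↔ ∀ M : Finset V, MinCov G M → x ∉ M → v ∉ M := by
    intro v; rw [hS']; exact mem_Rp'
  have hSq : ∀ v, v ∈ S → v ∈ q := fun v hv => (memS v).1 hv q hq hxq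
  have hS'q : ∀ v, v ∈ S' → v ∉ q := fun v hv => (memS' v).1 hv q hq hxq
  have hRR' : ∀ v, v ∈ R → v ∈ R' → False := fun v h1 h2 =>
    ((memR' v).1 h2 Mx hMx hxMx) ((memR v).1 h1 Mx hMx hxMx)
  have hRS : ∀ v, v ∈ R → v ∈ S → False := by
    intro v h1 h2
    obtain ⟨w, hadj, hsplit⟩ := exists_zo_partner hiso hd v
    obtain ⟨M, hM, hwM⟩ := exists_minCov_mem hiso w
    have hvM : v ∈ M := by
      by_cases hx : x ∈ M
      · exact (memR v).1 h1 M hM hx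
      · exact (memS v).1 h2 M hM hx
    exact ((hsplit M hM).1 hvM) hwM
  -- the two flips
  have hs1cov : MinCov G ((q \ R') ∪ R) := by
    rw [hR, hR']
    exact flip_minCov hiso hd ⟨Mx, hMx, hxMx⟩ hq
  have hs2cov : MinCov G ((((q \ R') ∪ R) \ S') ∪ S) := by
    rw [hS, hS']
    exact flip_minCov hiso hd ⟨q, hq, hxq⟩ hs1cov
  have hc1 : ((q \ R') ∪ R).card = q.card := minCov_card_eq hiso hu hs1cov hq
  have hc2 : ((((q \ R') ∪ R) \ S') ∪ S).card = q.card := minCov_card_eq hiso hu hs2cov hq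
  -- set identities
  have i1a : ((q \ R') ∪ R) \ q = R \ q := by
    ext v
    have f1 := hRR' v
    simp only [Finset.mem_sdiff, Finset.mem_union]
    tauto
  have i1b : q \ ((q \ R') ∪ R) = q ∩ R' := by
    ext v
    have f1 := hRR' v
    simp only [Finset.mem_sdiff, Finset.mem_union, Finset.mem_inter, not_or, not_and,
      not_not]
    tauto
  have i2a : ((((q \ R') ∪ R) \ S') ∪ S) \ q = (R \ S') \ q := by
    ext v
    have f1 := hRR' v
    have f2 := hSq v
    have f3 := hS'q v
    have f4 := hRS v
    simp only [Finset.mem_sdiff, Finset.mem_union]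
    tauto
  have i2b : q \ ((((q \ R') ∪ R) \ S') ∪ S) = q ∩ (R' \ S) := by
    ext v
    have f1 := hRR' v
    have f2 := hSq v
    have f3 := hS'q v
    simp only [Finset.mem_sdiff, Finset.mem_union, Finset.mem_inter, not_or, not_and,
      not_not]
    tauto
  have e1 : (R \ q).card = (q ∩ R').card := by
    rw [← i1a, ← i1b]
    exact card_sdiff_eq_of_card_eq (by omega)
  have e2 : ((R \ S') \ q).card = (q ∩ (R' \ S)).card := by
    rw [← i2a, ← i2b]
    exact card_sdiff_eq_of_card_eq (by omega)
  -- decompose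
  have d1 : R \ q = ((R \ S') \ q) ∪ (R ∩ S') := by
    ext v
    have f3 := hS'q v
    simp only [Finset.mem_sdiff, Finset.mem_union, Finset.mem_inter]
    tauto
  have d2 : q ∩ R' = (q ∩ (R' \ S)) ∪ (R' ∩ S) := by
    ext v
    have f2 := hSq v
    simp only [Finset.mem_sdiff, Finset.mem_union, Finset.mem_inter]
    tauto
  have dj1 : Disjoint ((R \ S') \ q) (R ∩ S') := by
    rw [Finset.disjoint_left]
    intro v hv1 hv2
    rw [Finset.mem_sdiff, Finset.mem_sdiff] at hv1
    rw [Finset.mem_inter] at hv2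
    exact hv1.1.2 hv2.2
  have dj2 : Disjoint (q ∩ (R' \ S)) (R' ∩ S) := by
    rw [Finset.disjoint_left]
    intro v hv1 hv2
    rw [Finset.mem_inter, Finset.mem_sdiff] at hv1
    rw [Finset.mem_inter] at hv2
    exact hv1.2.2 hv2.2
  have c1 : (R \ q).card = ((R \ S') \ q).card + (R ∩ S').card := by
    rw [d1, Finset.card_union_of_disjoint dj1]
  have c2 : (q ∩ R').card = (q ∩ (R' \ S)).card + (R' ∩ S).card := by
    rw [d2, Finset.card_union_of_disjoint dj2]
  omega

lemma reach_cases [Nonempty V] (hiso : ∀ v : V, ∃ w, G.Adj v w) {u v : V}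
    (h : (ZeroOne G).Reachable u v) :
    (∀ M : Finset V, MinCov G M → (v ∈ M ↔ u ∈ M)) ∨
      (∀ M : Finset V, MinCov G M → (v ∈ M ↔ u ∉ M)) := by
  obtain ⟨p⟩ := h
  induction p with
  | nil => exact Or.inl (fun M _ => Iff.rfl)
  | cons hadj p ih =>
    have hsplit := ((zeroOne_adj_iff hiso).1 hadj).2
    rcases ih with h1 | h1
    · right
      intro M hM
      have h2 := hsplit M hM
      have h3 := h1 M hM
      tauto
    · left
      intro M hM
      have h2 := hsplit M hM
      have h3 := h1 M hM
      tauto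

lemma mem_K_iff [Nonempty V] {x v : V} :
    v ∈ Rp G (fun M => x ∈ M) ∩ Rp' G (fun M => x ∉ M) ↔
      ∀ M : Finset V, MinCov G M → (v ∈ M ↔ x ∈ M) := by
  rw [Finset.mem_inter, mem_Rp, mem_Rp']
  constructor
  · rintro ⟨h1, h2⟩ M hM
    constructor
    · intro hv
      by_contra hx
      exact h2 M hM hx hv
    · exact h1 M hM
  · intro h
    exact ⟨fun M hM hx => (h M hM).2 hx, fun M hM hx hv => hx ((h M hM).1 hv)⟩

lemma mem_K'_iff [Nonempty V] {x v : V} :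
    v ∈ Rp' G (fun M => x ∈ M) ∩ Rp G (fun M => x ∉ M) ↔
      ∀ M : Finset V, MinCov G M → (v ∈ M ↔ x ∉ M) := by
  rw [Finset.mem_inter, mem_Rp, mem_Rp']
  constructor
  · rintro ⟨h1, h2⟩ M hM
    constructor
    · intro hv hx
      exact h1 M hM hx hv
    · exact h2 M hM
  · intro h
    exact ⟨fun M hM hx hv => (h M hM).1 hv hx, fun M hM hx => (h M hM).2 hx⟩

lemma reach_of_K [Nonempty V] (hiso : ∀ v : V, ∃ w, G.Adj v w)
    (hd : IsGraphDomain G) {x v : V}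
    (hvK : ∀ M : Finset V, MinCov G M → (v ∈ M ↔ x ∈ M)) :
    (ZeroOne G).Reachable x v := by
  classical
  by_contra hnr
  obtain ⟨Mx, hMx, hxMx⟩ := exists_minCov_mem hiso x
  obtain ⟨q, hq, hxq⟩ := exists_minCov_not_mem (G := G) x
  set Bfin : Finset V := univ.filter (fun u =>
    (ZeroOne G).Reachable x u ∧ ∀ M : Finset V, MinCov G M → (u ∈ M ↔ x ∉ M)) with hBfin
  set Pfin : Finset V := univ.filter (fun u =>
    (ZeroOne G).Reachable v u ∧ ∀ M : Finset V, MinCov G M → (u ∈ M ↔ v ∈ M)) with hPfin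
  have memB : ∀ u, u ∈ Bfin ↔ ((ZeroOne G).Reachable x u ∧
      ∀ M : Finset V, MinCov G M → (u ∈ M ↔ x ∉ M)) := by
    intro u; rw [hBfin]; simp
  have memP : ∀ u, u ∈ Pfin ↔ ((ZeroOne G).Reachable v u ∧
      ∀ M : Finset V, MinCov G M → (u ∈ M ↔ v ∈ M)) := by
    intro u; rw [hPfin]; simp
  have hind : IndepF G (Bfin ∪ Pfin) := by
    intro u hu w hw hadj
    rcases Finset.mem_union.1 hu with hu1 | hu1 <;>
      rcases Finset.mem_union.1 hw with hw1 | hw1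
    · -- both in Bfin
      have h1 := ((memB u).1 hu1).2 Mx hMx
      have h2 := ((memB w).1 hw1).2 Mx hMx
      rcases hMx.1 hadj with h | h <;> tauto
    · -- u ∈ Bfin, w ∈ Pfin
      have hzo : (ZeroOne G).Adj u w := by
        rw [zeroOne_adj_iff hiso]
        refine ⟨hadj, fun M hM => ?_⟩
        have h1 := ((memB u).1 hu1).2 M hM
        have h2 := ((memP w).1 hw1).2 M hM
        have h3 := hvK M hM
        tauto
      exact hnr ((((memB u).1 hu1).1.trans hzo.reachable).trans
        (((memP w).1 hw1).1.symm))
    · -- u ∈ Pfin, w ∈ Bfin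
      have hzo : (ZeroOne G).Adj w u := by
        rw [zeroOne_adj_iff hiso]
        refine ⟨hadj.symm, fun M hM => ?_⟩
        have h1 := ((memB w).1 hw1).2 M hM
        have h2 := ((memP u).1 hu1).2 M hM
        have h3 := hvK M hM
        tauto
      exact hnr ((((memB w).1 hw1).1.trans hzo.reachable).trans
        (((memP u).1 hu1).1.symm))
    · -- both in Pfin
      have h1 := ((memP u).1 hu1).2 q hq
      have h2 := ((memP w).1 hw1).2 q hq
      have h3 := hvK q hq
      rcases hq.1 hadj with h | h <;> tauto
  obtain ⟨I, hsub, hindI, hmax⟩ := exists_maximal_indep hind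
  have hMcov : MinCov G (univ \ I) := compl_minCov hindI hmax
  -- x has a 0-1 partner which lies in Bfin
  obtain ⟨w', hadj', hsplit'⟩ := exists_zo_partner hiso hd x
  have hw'B : w' ∈ Bfin := by
    rw [memB]
    constructor
    · exact ((zeroOne_adj_iff hiso).2 ⟨hadj', hsplit'⟩).reachable
    · intro M hM
      have := hsplit' M hM
      tauto
  have hxI : x ∉ I := by
    intro hxI
    exact hindI x hxI w' (hsub (Finset.mem_union_left _ hw'B)) hadj'
  have hxM : x ∈ univ \ I := by
    simp [Finset.mem_sdiff, hxI]
  have hvM : v ∈ univ \ I := (hvK _ hMcov).2 hxM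
  have hvP : v ∈ Pfin := by
    rw [memP]
    exact ⟨SimpleGraph.Reachable.refl v, fun M _ => Iff.rfl⟩
  have : v ∉ univ \ I := by
    simp only [Finset.mem_sdiff, Finset.mem_univ, true_and, not_not]
    exact hsub (Finset.mem_union_right _ hvP)
  exact this hvM

lemma reach_of_K' [Nonempty V] (hiso : ∀ v : V, ∃ w, G.Adj v w)
    (hd : IsGraphDomain G) {x v : V}
    (hvK : ∀ M : Finset V, MinCov G M → (v ∈ M ↔ x ∉ M)) :
    (ZeroOne G).Reachable x v := by
  classical
  by_contra hnr
  obtain ⟨Mx, hMx, hxMx⟩ := exists_minCov_mem hiso x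
  obtain ⟨q, hq, hxq⟩ := exists_minCov_not_mem (G := G) x
  set Afin : Finset V := univ.filter (fun u =>
    (ZeroOne G).Reachable x u ∧ ∀ M : Finset V, MinCov G M → (u ∈ M ↔ x ∈ M)) with hAfin
  set Pfin : Finset V := univ.filter (fun u =>
    (ZeroOne G).Reachable v u ∧ ∀ M : Finset V, MinCov G M → (u ∈ M ↔ v ∈ M)) with hPfin
  have memA : ∀ u, u ∈ Afin ↔ ((ZeroOne G).Reachable x u ∧
      ∀ M : Finset V, MinCov G M → (u ∈ M ↔ x ∈ M)) := by
    intro u; rw [hAfin]; simp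
  have memP : ∀ u, u ∈ Pfin ↔ ((ZeroOne G).Reachable v u ∧
      ∀ M : Finset V, MinCov G M → (u ∈ M ↔ v ∈ M)) := by
    intro u; rw [hPfin]; simp
  have hind : IndepF G (Afin ∪ Pfin) := by
    intro u hu w hw hadj
    rcases Finset.mem_union.1 hu with hu1 | hu1 <;>
      rcases Finset.mem_union.1 hw with hw1 | hw1
    · have h1 := ((memA u).1 hu1).2 q hq
      have h2 := ((memA w).1 hw1).2 q hq
      rcases hq.1 hadj with h | h <;> tauto
    · have hzo : (ZeroOne G).Adj u w := by
        rw [zeroOne_adj_iff hiso]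
        refine ⟨hadj, fun M hM => ?_⟩
        have h1 := ((memA u).1 hu1).2 M hM
        have h2 := ((memP w).1 hw1).2 M hM
        have h3 := hvK M hM
        tauto
      exact hnr ((((memA u).1 hu1).1.trans hzo.reachable).trans
        (((memP w).1 hw1).1.symm))
    · have hzo : (ZeroOne G).Adj w u := by
        rw [zeroOne_adj_iff hiso]
        refine ⟨hadj.symm, fun M hM => ?_⟩
        have h1 := ((memA w).1 hw1).2 M hM
        have h2 := ((memP u).1 hu1).2 M hM
        have h3 := hvK M hM
        tauto
      exact hnr ((((memA w).1 hw1).1.trans hzo.reachable).trans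
        (((memP u).1 hu1).1.symm))
    · have h1 := ((memP u).1 hu1).2 Mx hMx
      have h2 := ((memP w).1 hw1).2 Mx hMx
      have h3 := hvK Mx hMx
      rcases hMx.1 hadj with h | h <;> tauto
  obtain ⟨I, hsub, hindI, hmax⟩ := exists_maximal_indep hind
  have hMcov : MinCov G (univ \ I) := compl_minCov hindI hmax
  have hxA : x ∈ Afin := by
    rw [memA]
    exact ⟨SimpleGraph.Reachable.refl x, fun M _ => Iff.rfl⟩
  have hxM : x ∉ univ \ I := by
    simp only [Finset.mem_sdiff, Finset.mem_univ, true_and, not_not]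
    exact hsub (Finset.mem_union_left _ hxA)
  have hvM : v ∈ univ \ I := (hvK _ hMcov).2 hxM
  have hvP : v ∈ Pfin := by
    rw [memP]
    exact ⟨SimpleGraph.Reachable.refl v, fun M _ => Iff.rfl⟩
  have : v ∉ univ \ I := by
    simp only [Finset.mem_sdiff, Finset.mem_univ, true_and, not_not]
    exact hsub (Finset.mem_union_right _ hvP)
  exact this hvM

lemma complete_K_K' [Nonempty V] (hiso : ∀ v : V, ∃ w, G.Adj v w) {x u w : V}
    (hu : ∀ M : Finset V, MinCov G M → (u ∈ M ↔ x ∈ M))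
    (hw : ∀ M : Finset V, MinCov G M → (w ∈ M ↔ x ∉ M)) :
    (ZeroOne G).Adj u w := by
  classical
  obtain ⟨Mx, hMx, hxMx⟩ := exists_minCov_mem hiso x
  have hne : u ≠ w := by
    intro h
    subst h
    have h1 := hu Mx hMx
    have h2 := hw Mx hMx
    tauto
  have hadj : G.Adj u w := by
    by_contra hnadj
    have hind : IndepF G {u, w} := by
      intro a ha b hb hab
      have ha' : a = u ∨ a = w := by simpa using ha
      have hb' : b = u ∨ b = w := by simpa using hb
      rcases ha' with rfl | rfl <;> rcases hb' with rfl | rfl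
      · exact G.loopless.irrefl _ hab
      · exact hnadj hab
      · exact hnadj hab.symm
      · exact G.loopless.irrefl _ hab
    obtain ⟨I, hsub, hindI, hmax⟩ := exists_maximal_indep hind
    have hMcov : MinCov G (univ \ I) := compl_minCov hindI hmax
    have huI : u ∉ univ \ I := by
      simp only [Finset.mem_sdiff, Finset.mem_univ, true_and, not_not]
      exact hsub (Finset.mem_insert_self u {w})
    have hwI : w ∉ univ \ I := by
      simp only [Finset.mem_sdiff, Finset.mem_univ, true_and, not_not]
      exact hsub (Finset.mem_insert_of_mem (Finset.mem_singleton_self w))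
    have h1 := hu _ hMcov
    have h2 := hw _ hMcov
    tauto
  rw [zeroOne_adj_iff hiso]
  refine ⟨hadj, fun M hM => ?_⟩
  have h1 := hu M hM
  have h2 := hw M hM
  tauto

end Kaa

/-- Let `G` have at least one vertex and no isolated vertices.  If `G` is an
unmixed domain, then every connected component of `G^{0-1}` is a complete bipartite graph
`K_{a,a}` for some `a ≥ 1`: it has a vertex bipartition `A ∪ B` with `|A| = |B| ≥ 1` whose
edges are exactly the pairs `{x, y}` with `x ∈ A`, `y ∈ B`. -/
theorem unmixed_domain_components_are_Kaa [Nonempty V] (G : SimpleGraph V)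
    (hiso : ∀ v : V, ∃ w, G.Adj v w)
    (hu : IsUnmixed G) (hd : IsGraphDomain G) :
    ∀ C : (ZeroOne G).ConnectedComponent, ∃ A B : Set V,
      IsCompBipartition (ZeroOne G) C A B ∧ A.Nonempty ∧ A.ncard = B.ncard := by
  classical
  intro C
  induction C using SimpleGraph.ConnectedComponent.ind with
  | _ x =>
  set K : Finset V := Kaa.Rp G (fun M => x ∈ M) ∩ Kaa.Rp' G (fun M => x ∉ M) with hK
  set K' : Finset V := Kaa.Rp' G (fun M => x ∈ M) ∩ Kaa.Rp G (fun M => x ∉ M) with hK'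
  have memK : ∀ v, v ∈ K ↔ ∀ M : Finset V, Kaa.MinCov G M → (v ∈ M ↔ x ∈ M) := by
    intro v; rw [hK]; exact Kaa.mem_K_iff
  have memK' : ∀ v, v ∈ K' ↔ ∀ M : Finset V, Kaa.MinCov G M → (v ∈ M ↔ x ∉ M) := by
    intro v; rw [hK']; exact Kaa.mem_K'_iff
  obtain ⟨Mx, hMx, hxMx⟩ := Kaa.exists_minCov_mem hiso x
  obtain ⟨q, hq, hxq⟩ := Kaa.exists_minCov_not_mem (G := G) x
  have hsupp : ∀ v, (v ∈ (K : Set V) ∪ (K' : Set V)) ↔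
      v ∈ ((ZeroOne G).connectedComponentMk x).supp := by
    intro v
    rw [SimpleGraph.ConnectedComponent.mem_supp_iff, SimpleGraph.ConnectedComponent.eq]
    constructor
    · rintro (hv | hv)
      · rw [Finset.mem_coe, memK] at hv
        exact (Kaa.reach_of_K hiso hd hv).symm
      · rw [Finset.mem_coe, memK'] at hv
        exact (Kaa.reach_of_K' hiso hd hv).symm
    · intro hreach
      rcases Kaa.reach_cases hiso hreach.symm with h | h
      · left; rw [Finset.mem_coe, memK]; exact h
      · right; rw [Finset.mem_coe, memK']; exact h
  refine ⟨(K : Set V), (K' : Set V), ⟨?_, ?_, ?_⟩, ⟨x, ?_⟩, ?_⟩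
  · ext v
    exact hsupp v
  · rw [Set.disjoint_left]
    intro v hv hv'
    rw [Finset.mem_coe, memK] at hv
    rw [Finset.mem_coe, memK'] at hv'
    have h1 := hv Mx hMx
    have h2 := hv' Mx hMx
    tauto
  · intro a ha b hb
    constructor
    · intro hadj
      have hsplit := ((Kaa.zeroOne_adj_iff hiso).1 hadj).2
      have ha' := (hsupp a).2 ha
      have hb' := (hsupp b).2 hb
      rcases ha' with ha1 | ha1 <;> rcases hb' with hb1 | hb1
      · rw [Finset.mem_coe, memK] at ha1 hb1
        have h1 := ha1 Mx hMx
        have h2 := hb1 Mx hMx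
        have h3 := hsplit Mx hMx
        tauto
      · exact Or.inl ⟨ha1, hb1⟩
      · exact Or.inr ⟨ha1, hb1⟩
      · rw [Finset.mem_coe, memK'] at ha1 hb1
        have h1 := ha1 q hq
        have h2 := hb1 q hq
        have h3 := hsplit q hq
        tauto
    · rintro (⟨ha1, hb1⟩ | ⟨ha1, hb1⟩)
      · rw [Finset.mem_coe, memK] at ha1
        rw [Finset.mem_coe, memK'] at hb1
        exact Kaa.complete_K_K' hiso ha1 hb1
      · rw [Finset.mem_coe, memK'] at ha1
        rw [Finset.mem_coe, memK] at hb1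
        exact (Kaa.complete_K_K' hiso hb1 ha1).symm
  · rw [Finset.mem_coe, memK]
    intro M _
    exact Iff.rfl
  · rw [Set.ncard_coe_finset, Set.ncard_coe_finset, hK, hK']
    exact Kaa.K_card_eq hiso hu hd x
end
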